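/- arXiv:1310.4892 — 7 statements merged into one kernel-verified Lean document; each statement's English description precedes it below -/
import Mathlib

section
/- Let α > 1 and let (x_n)_{n<ω} be a sequence in (0,1) with x_{n+1} = x_n^α for every n. Suppose φ : [0,1] → [0,∞) is essentially increasing on [0,1] with φ(x_0) > 0, and there is λ > 0 such that φ(x_{n+1}) ≥ λ·φ(x_n) for every n. Then (φ(x))_{x∈[0,1]} ≈ (φ(x^α))_{x∈[0,1]}. -/
open Set

/-- `f` is essentially increasing on `D`: for some `C ≥ 1`,
`x ≤ y` implies `f x ≤ C * f y` for `x, y ∈ D`. -/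
def EssIncOn (f : ℝ → ℝ) (D : Set ℝ) : Prop :=
  ∃ C : ℝ, 1 ≤ C ∧ ∀ x ∈ D, ∀ y ∈ D, x ≤ y → f x ≤ C * f y

/-- `(f x)_{x ∈ D} ≈ (g x)_{x ∈ D}`: for some `C ≥ 1`,
`g x / C ≤ f x ≤ C * g x` for all `x ∈ D`. -/
def EquivOn (f g : ℝ → ℝ) (D : Set ℝ) : Prop :=
  ∃ C : ℝ, 1 ≤ C ∧ ∀ x ∈ D, g x / C ≤ f x ∧ f x ≤ C * g x

/-- `(u n) ≈ (v n)`: for some `C ≥ 1`, `v n / C ≤ u n ≤ C * v n` for all `n`. -/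
def SeqEquiv (u v : ℕ → ℝ) : Prop :=
  ∃ C : ℝ, 1 ≤ C ∧ ∀ n, v n / C ≤ u n ∧ u n ≤ C * v n

theorem stmt1 (α : ℝ) (hα : 1 < α) (x : ℕ → ℝ)
    (hx : ∀ n, x n ∈ Ioo (0:ℝ) 1)
    (hrec : ∀ n, x (n+1) = x n ^ α)
    (φ : ℝ → ℝ) (hφnn : ∀ t ∈ Icc (0:ℝ) 1, 0 ≤ φ t)
    (hφei : EssIncOn φ (Icc 0 1))
    (hφ0 : 0 < φ (x 0))
    (hlam : ∃ lam > (0:ℝ), ∀ n, lam * φ (x n) ≤ φ (x (n+1))) :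
    EquivOn φ (fun t => φ (t ^ α)) (Icc 0 1) := by
  obtain ⟨C, hC1, hC⟩ := hφei
  obtain ⟨lam, hlam0, hlam⟩ := hlam
  have hC0 : (0:ℝ) < C := lt_of_lt_of_le one_pos hC1
  have hxI : ∀ n, x n ∈ Icc (0:ℝ) 1 := fun n => ⟨(hx n).1.le, (hx n).2.le⟩
  have h1I : (1:ℝ) ∈ Icc (0:ℝ) 1 := ⟨zero_le_one, le_refl 1⟩
  have hφ1 : 0 < φ 1 := by
    have := hC (x 0) (hxI 0) 1 h1I (hx 0).2.le
    nlinarith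
  -- decreasing
  have hdec : ∀ n, x (n+1) ≤ x n := by
    intro n
    rw [hrec n]
    calc x n ^ α ≤ x n ^ (1:ℝ) :=
          Real.rpow_le_rpow_of_exponent_ge (hx n).1 (hx n).2.le hα.le
      _ = x n := Real.rpow_one _
  -- closed form and tendsto 0
  have hform : ∀ n, x n = x 0 ^ (α ^ n) := by
    intro n
    induction n with
    | zero => simp
    | succ n ih =>
      rw [hrec n, ih, ← Real.rpow_mul (hx 0).1.le, ← pow_succ]
  have htend : Filter.Tendsto x Filter.atTop (nhds 0) := by
    have h1 : Filter.Tendsto (fun n : ℕ => (α : ℝ) ^ n) Filter.atTop Filter.atTop :=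
      tendsto_pow_atTop_atTop_of_one_lt hα
    have h2 : Filter.Tendsto (fun y : ℝ => x 0 ^ y) Filter.atTop (nhds 0) :=
      tendsto_rpow_atTop_of_base_lt_one _ (by linarith [(hx 0).1]) (hx 0).2
    have h3 := h2.comp h1
    have : x = fun n => x 0 ^ (α ^ n : ℝ) := funext hform
    rw [this]
    exact h3
  set A : ℝ := C^2 * φ 1 / (lam * φ (x 0)) with hA
  set B : ℝ := C^2 / lam^2 with hB
  have hA0 : 0 ≤ A := by positivity
  have hB0 : 0 ≤ B := by positivity
  refine ⟨A + B + C, by linarith, ?_⟩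
  intro t ht
  have hK0 : (0:ℝ) < A + B + C := by linarith
  have htα : t ^ α ∈ Icc (0:ℝ) 1 :=
    ⟨Real.rpow_nonneg ht.1 α, Real.rpow_le_one ht.1 ht.2 (by linarith)⟩
  have hφt : 0 ≤ φ t := hφnn t ht
  have hφtα : 0 ≤ φ (t ^ α) := hφnn _ htα
  have bound1 : φ (t ^ α) ≤ C * φ t := by
    rcases eq_or_lt_of_le ht.1 with h0 | h0
    · rw [← h0, Real.zero_rpow (by positivity)]
      nlinarith [hφnn (0:ℝ) ⟨le_refl 0, zero_le_one⟩]
    · have : t ^ α ≤ t := by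
        calc t ^ α ≤ t ^ (1:ℝ) :=
              Real.rpow_le_rpow_of_exponent_ge h0 ht.2 hα.le
          _ = t := Real.rpow_one _
      exact hC _ htα t ht this
  constructor
  · rw [div_le_iff₀ hK0]
    nlinarith
  · -- upper bound : φ t ≤ (A + B + C) * φ (t^α)
    rcases eq_or_lt_of_le ht.1 with h0 | h0
    · have ht0 : t = 0 := h0.symm
      subst ht0
      have hz : (0:ℝ) ^ α = 0 := Real.zero_rpow (by positivity)
      simp only [hz]
      nlinarith [hφnn (0:ℝ) ⟨le_refl 0, zero_le_one⟩]
    rcases le_or_gt t (x 0) with hle | hlt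
    · -- find n with x (n+1) ≤ t ≤ x n
      have hex : ∃ k, x k ≤ t := by
        obtain ⟨k, hk⟩ := (htend.eventually (gt_mem_nhds h0)).exists
        exact ⟨k, hk.le⟩
      obtain ⟨n, hnt, htn⟩ : ∃ n, x (n+1) ≤ t ∧ t ≤ x n := by
        rcases Nat.eq_zero_or_eq_succ_pred (Nat.find hex) with hm | hm
        · exact ⟨0, le_trans (hdec 0) (hm ▸ Nat.find_spec hex), hle⟩
        · refine ⟨Nat.find hex - 1, ?_, ?_⟩
          · have := Nat.find_spec hex
            rwa [hm] at this
          · have := Nat.find_min hex (m := Nat.find hex - 1)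
              (by omega)
            linarith [not_le.mp this]
      -- φ t ≤ C φ(x n),  lam^2 φ(x n) ≤ φ(x (n+2)),  φ(x(n+2)) ≤ C φ(t^α)
      have f1 : φ t ≤ C * φ (x n) := hC t ht (x n) (hxI n) htn
      have f2 : lam^2 * φ (x n) ≤ φ (x (n+2)) := by
        have h1 := hlam n
        have h2 := hlam (n+1)
        nlinarith
      have f3 : φ (x (n+2)) ≤ C * φ (t ^ α) := by
        apply hC _ (hxI (n+2)) _ htα
        rw [show n+2 = (n+1)+1 from rfl, hrec (n+1)]
        exact Real.rpow_le_rpow (hx (n+1)).1.le hnt (by linarith)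
      have goalB : φ t ≤ B * φ (t ^ α) := by
        rw [hB, div_mul_eq_mul_div, le_div_iff₀ (by positivity)]
        have hφxn : 0 ≤ φ (x n) := hφnn _ (hxI n)
        nlinarith [mul_le_mul_of_nonneg_left f2 hC0.le,
          mul_le_mul_of_nonneg_right f1 (sq_nonneg lam)]
      nlinarith
    · -- x 0 < t : φ t ≤ C φ 1,  lam φ(x 0) ≤ C φ(t^α)
      have f1 : φ t ≤ C * φ 1 := hC t ht 1 h1I ht.2
      have f2 : lam * φ (x 0) ≤ C * φ (t ^ α) := by
        have h1 := hlam 0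
        have h2 : φ (x 1) ≤ C * φ (t ^ α) := by
          apply hC _ (hxI 1) _ htα
          rw [hrec 0]
          exact Real.rpow_le_rpow (hx 0).1.le hlt.le (by linarith)
        linarith
      have goalA : φ t ≤ A * φ (t ^ α) := by
        rw [hA, div_mul_eq_mul_div, le_div_iff₀ (by positivity)]
        nlinarith [mul_le_mul f1 f2 (by positivity) (by positivity)]
      nlinarith
end

section
/- Let α ≥ 1 and let φ : [0,1] → [0,∞) be essentially increasing on [0,1] with φ(1/2) > 0, and suppose there is δ > 0 such that φ(1/2^{2n}) ≥ δ·φ(1/2^n) for every n < ω. Set f(x) = x^α·φ(x) for x ∈ [0,1]. Then E_f is an equivalence relation on [0,1]^ω, and moreover there exist ε > 0 and M < ω such that for every n > M and all x, y ∈ [0,1]: if φ(x) ≤ ε·φ(y)·φ(1/2^n), then x ≤ y/2^{n+1}. -/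
open Set

/-- The relation `E_f` on `[0,1]^ω`: `(x_n) E_f (y_n)` iff `Σ f(|x_n − y_n|) < ∞`
(for `f ≥ 0` this is equivalent to summability). -/
def EF (f : ℝ → ℝ) (x y : ℕ → Icc (0:ℝ) 1) : Prop :=
  Summable fun n => f |(x n : ℝ) - (y n : ℝ)|

/-- Borel reducibility of binary relations. -/
def BorelReducible {X Y : Type*} [MeasurableSpace X] [MeasurableSpace Y]
    (E : X → X → Prop) (F : Y → Y → Prop) : Prop :=
  ∃ θ : X → Y, Measurable θ ∧ ∀ x y, E x y ↔ F (θ x) (θ y)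

/-- The relation `ℝ^ω/ℓ_p`: `x E y` iff `Σ |x_n − y_n|^p < ∞`. -/
def lpRel (p : ℝ) (x y : ℕ → ℝ) : Prop :=
  Summable fun n => |x n - y n| ^ p

section Aux
variable {φ : ℝ → ℝ} {C δ : ℝ}

lemma memIcc (n : ℕ) : ((1/2:ℝ))^n ∈ Icc (0:ℝ) 1 := by
  constructor
  · positivity
  · exact pow_le_one₀ (by norm_num) (by norm_num)

lemma absmem {u v : ℝ} (hu : u ∈ Icc (0:ℝ) 1) (hv : v ∈ Icc (0:ℝ) 1) :
    |u - v| ∈ Icc (0:ℝ) 1 := by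
  obtain ⟨hu0, hu1⟩ := hu; obtain ⟨hv0, hv1⟩ := hv
  constructor
  · exact abs_nonneg _
  · rw [abs_sub_le_iff]; constructor <;> linarith

lemma phi1pos (hC1 : 1 ≤ C)
    (hC : ∀ x ∈ Icc (0:ℝ) 1, ∀ y ∈ Icc (0:ℝ) 1, x ≤ y → φ x ≤ C * φ y)
    (hhalf : 0 < φ (1/2)) : 0 < φ 1 := by
  have h := hC (1/2) (by norm_num) 1 (by norm_num) (by norm_num)
  nlinarith

end Aux
section Aux2
variable {φ : ℝ → ℝ} {C δ c₁ : ℝ}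

lemma step (hC1 : 1 ≤ C)
    (hC : ∀ x ∈ Icc (0:ℝ) 1, ∀ y ∈ Icc (0:ℝ) 1, x ≤ y → φ x ≤ C * φ y)
    (hφnn : ∀ t ∈ Icc (0:ℝ) 1, 0 ≤ φ t)
    (hhalf : 0 < φ (1/2)) (hδ0 : 0 < δ)
    (hδ : ∀ n : ℕ, δ * φ ((1/2:ℝ)^n) ≤ φ ((1/2:ℝ)^(2*n)))
    (hc₁ : c₁ = min (min (δ/C) (φ (1/2) / φ 1)) 1) (m : ℕ) :
    c₁ * φ ((1/2:ℝ)^m) ≤ φ ((1/2:ℝ)^(m+1)) := by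
  have hC0 : (0:ℝ) < C := lt_of_lt_of_le one_pos hC1
  have h1 : 0 < φ 1 := phi1pos hC1 hC hhalf
  match m with
  | 0 =>
    have hle : c₁ ≤ φ (1/2) / φ 1 := hc₁ ▸ le_trans (min_le_left _ _) (min_le_right _ _)
    rw [pow_zero, pow_one]
    calc c₁ * φ 1 ≤ (φ (1/2) / φ 1) * φ 1 :=
          mul_le_mul_of_nonneg_right hle (le_of_lt h1)
      _ = φ (1/2) := by field_simp
  | k + 1 =>
    have h2 : δ * φ ((1/2:ℝ)^(k+1)) ≤ φ ((1/2:ℝ)^(2*(k+1))) := hδ (k+1)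
    have h3 : φ ((1/2:ℝ)^(2*(k+1))) ≤ C * φ ((1/2:ℝ)^(k+2)) := by
      apply hC _ (memIcc _) _ (memIcc _)
      apply pow_le_pow_of_le_one (by norm_num) (by norm_num)
      omega
    have hc : c₁ ≤ δ / C := hc₁ ▸ le_trans (min_le_left _ _) (min_le_left _ _)
    have hnn : 0 ≤ φ ((1/2:ℝ)^(k+1)) := hφnn _ (memIcc _)
    have : δ * φ ((1/2:ℝ)^(k+1)) ≤ C * φ ((1/2:ℝ)^(k+2)) := le_trans h2 h3
    have hdiv : (δ/C) * φ ((1/2:ℝ)^(k+1)) ≤ φ ((1/2:ℝ)^(k+2)) := by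
      rw [div_mul_eq_mul_div, div_le_iff₀ hC0]
      linarith [this]
    calc c₁ * φ ((1/2:ℝ)^(k+1)) ≤ (δ/C) * φ ((1/2:ℝ)^(k+1)) :=
          mul_le_mul_of_nonneg_right hc hnn
      _ ≤ φ ((1/2:ℝ)^(k+2)) := hdiv

lemma iter (hC1 : 1 ≤ C)
    (hC : ∀ x ∈ Icc (0:ℝ) 1, ∀ y ∈ Icc (0:ℝ) 1, x ≤ y → φ x ≤ C * φ y)
    (hφnn : ∀ t ∈ Icc (0:ℝ) 1, 0 ≤ φ t)
    (hhalf : 0 < φ (1/2)) (hδ0 : 0 < δ)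
    (hδ : ∀ n : ℕ, δ * φ ((1/2:ℝ)^n) ≤ φ ((1/2:ℝ)^(2*n)))
    (hc₁ : c₁ = min (min (δ/C) (φ (1/2) / φ 1)) 1) (r m : ℕ) :
    c₁^r * φ ((1/2:ℝ)^m) ≤ φ ((1/2:ℝ)^(m+r)) := by
  have h1 : 0 < φ 1 := phi1pos hC1 hC hhalf
  have hc₁0 : 0 < c₁ := by
    rw [hc₁]
    simp only [lt_min_iff]
    refine ⟨⟨by positivity, by positivity⟩, one_pos⟩
  induction r with
  | zero => simp
  | succ r ih =>
    have h := step hC1 hC hφnn hhalf hδ0 hδ hc₁ (m + r)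
    calc c₁^(r+1) * φ ((1/2:ℝ)^m) = c₁ * (c₁^r * φ ((1/2:ℝ)^m)) := by ring
      _ ≤ c₁ * φ ((1/2:ℝ)^(m+r)) := mul_le_mul_of_nonneg_left ih (le_of_lt hc₁0)
      _ ≤ φ ((1/2:ℝ)^(m+r+1)) := h
      _ = φ ((1/2:ℝ)^(m+(r+1))) := by ring_nf

lemma posn (hC1 : 1 ≤ C)
    (hC : ∀ x ∈ Icc (0:ℝ) 1, ∀ y ∈ Icc (0:ℝ) 1, x ≤ y → φ x ≤ C * φ y)
    (hφnn : ∀ t ∈ Icc (0:ℝ) 1, 0 ≤ φ t)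
    (hhalf : 0 < φ (1/2)) (hδ0 : 0 < δ)
    (hδ : ∀ n : ℕ, δ * φ ((1/2:ℝ)^n) ≤ φ ((1/2:ℝ)^(2*n)))
    (n : ℕ) : 0 < φ ((1/2:ℝ)^n) := by
  have h1 : 0 < φ 1 := phi1pos hC1 hC hhalf
  set c₁ := min (min (δ/C) (φ (1/2) / φ 1)) 1 with hc₁
  have h := iter hC1 hC hφnn hhalf hδ0 hδ hc₁ n 0
  have hc₁0 : 0 < c₁ := by
    rw [hc₁]; simp only [lt_min_iff]
    exact ⟨⟨by positivity, by positivity⟩, one_pos⟩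
  simp only [pow_zero, zero_add] at h
  nlinarith [pow_pos hc₁0 n]
end Aux2
section Aux3
variable {φ : ℝ → ℝ} {C δ c₁ c : ℝ}

lemma KL (hC1 : 1 ≤ C)
    (hC : ∀ x ∈ Icc (0:ℝ) 1, ∀ y ∈ Icc (0:ℝ) 1, x ≤ y → φ x ≤ C * φ y)
    (hδ : ∀ n : ℕ, δ * φ ((1/2:ℝ)^n) ≤ φ ((1/2:ℝ)^(2*n)))
    {a q : ℕ} (h1 : a ≤ q) (h2 : q ≤ 2*a) :
    (δ/C) * φ ((1/2:ℝ)^a) ≤ φ ((1/2:ℝ)^q) := by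
  have hC0 : (0:ℝ) < C := lt_of_lt_of_le one_pos hC1
  have h3 : φ ((1/2:ℝ)^(2*a)) ≤ C * φ ((1/2:ℝ)^q) := by
    apply hC _ (memIcc _) _ (memIcc _)
    exact pow_le_pow_of_le_one (by norm_num) (by norm_num) h2
  have h4 := hδ a
  rw [div_mul_eq_mul_div, div_le_iff₀ hC0]
  linarith

-- c = c₁^4 * (δ/C), δ ≤ 1 assumed (WLOG)
lemma bigL (hC1 : 1 ≤ C)
    (hC : ∀ x ∈ Icc (0:ℝ) 1, ∀ y ∈ Icc (0:ℝ) 1, x ≤ y → φ x ≤ C * φ y)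
    (hφnn : ∀ t ∈ Icc (0:ℝ) 1, 0 ≤ φ t)
    (hhalf : 0 < φ (1/2)) (hδ0 : 0 < δ) (hδ1 : δ ≤ 1)
    (hδ : ∀ n : ℕ, δ * φ ((1/2:ℝ)^n) ≤ φ ((1/2:ℝ)^(2*n)))
    (hc₁ : c₁ = min (min (δ/C) (φ (1/2) / φ 1)) 1)
    (hc : c = c₁^4 * (δ/C))
    {a q : ℕ} (h1 : a ≤ q) (h2 : q ≤ 2*a + 4) :
    c * φ ((1/2:ℝ)^a) ≤ φ ((1/2:ℝ)^q) := by
  have hC0 : (0:ℝ) < C := lt_of_lt_of_le one_pos hC1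
  have h1' : 0 < φ 1 := phi1pos hC1 hC hhalf
  have hc₁0 : 0 < c₁ := by
    rw [hc₁]; simp only [lt_min_iff]
    exact ⟨⟨by positivity, by positivity⟩, one_pos⟩
  have hc₁1 : c₁ ≤ 1 := hc₁ ▸ min_le_right _ _
  have hnn : ∀ j : ℕ, 0 ≤ φ ((1/2:ℝ)^j) := fun j => hφnn _ (memIcc j)
  rcases le_or_gt q (2*a) with hq | hq
  · have := KL hC1 hC hδ h1 hq
    have hcle : c ≤ δ/C := by
      rw [hc]
      nlinarith [pow_pos hc₁0 4, pow_le_one₀ (le_of_lt hc₁0) hc₁1 (n := 4), div_pos hδ0 hC0]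
    calc c * φ ((1/2:ℝ)^a) ≤ (δ/C) * φ ((1/2:ℝ)^a) :=
          mul_le_mul_of_nonneg_right hcle (hnn a)
      _ ≤ _ := this
  · set r := q - 2*a with hr
    have hq' : q = 2*a + r := by omega
    have hr4 : r ≤ 4 := by omega
    have hit := iter hC1 hC hφnn hhalf hδ0 hδ hc₁ r (2*a)
    have hstep : δ * φ ((1/2:ℝ)^a) ≤ φ ((1/2:ℝ)^(2*a)) := hδ a
    have hc₁r : c₁^4 ≤ c₁^r := pow_le_pow_of_le_one (le_of_lt hc₁0) hc₁1 hr4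
    have key : c * φ ((1/2:ℝ)^a) ≤ c₁^r * φ ((1/2:ℝ)^(2*a)) := by
      rw [hc]
      have e1 : (δ/C) * φ ((1/2:ℝ)^a) ≤ φ ((1/2:ℝ)^(2*a)) := by
        rw [div_mul_eq_mul_div, div_le_iff₀ hC0]
        nlinarith [hnn (2*a)]
      calc c₁^4 * (δ/C) * φ ((1/2:ℝ)^a) = c₁^4 * ((δ/C) * φ ((1/2:ℝ)^a)) := by ring
        _ ≤ c₁^4 * φ ((1/2:ℝ)^(2*a)) :=
            mul_le_mul_of_nonneg_left e1 (by positivity)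
        _ ≤ c₁^r * φ ((1/2:ℝ)^(2*a)) := mul_le_mul_of_nonneg_right hc₁r (hnn _)
    calc c * φ ((1/2:ℝ)^a) ≤ c₁^r * φ ((1/2:ℝ)^(2*a)) := key
      _ ≤ φ ((1/2:ℝ)^(2*a + r)) := hit
      _ = φ ((1/2:ℝ)^q) := by rw [hq']
end Aux3
section Aux4
variable {φ : ℝ → ℝ} {C δ c₁ c c₂ : ℝ}

lemma Rhelp (hC1 : 1 ≤ C)
    (hC : ∀ x ∈ Icc (0:ℝ) 1, ∀ y ∈ Icc (0:ℝ) 1, x ≤ y → φ x ≤ C * φ y)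
    (hφnn : ∀ t ∈ Icc (0:ℝ) 1, 0 ≤ φ t)
    (hhalf : 0 < φ (1/2)) (hδ0 : 0 < δ) (hδ1 : δ ≤ 1)
    (hδ : ∀ n : ℕ, δ * φ ((1/2:ℝ)^n) ≤ φ ((1/2:ℝ)^(2*n)))
    (hc₁ : c₁ = min (min (δ/C) (φ (1/2) / φ 1)) 1)
    (hc : c = c₁^4 * (δ/C))
    (hc₂ : c₂ = c / (C^2 * φ 1))
    {m n q : ℕ} (hmn : m ≤ n) (hq : q ≤ m + n + 2) :
    c₂ * (φ ((1/2:ℝ)^m) * φ ((1/2:ℝ)^n)) ≤ φ ((1/2:ℝ)^q) := by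
  have hC0 : (0:ℝ) < C := lt_of_lt_of_le one_pos hC1
  have h1' : 0 < φ 1 := phi1pos hC1 hC hhalf
  have hc₁0 : 0 < c₁ := by
    rw [hc₁]; simp only [lt_min_iff]
    exact ⟨⟨by positivity, by positivity⟩, one_pos⟩
  have hc₁1 : c₁ ≤ 1 := hc₁ ▸ min_le_right _ _
  have hc0 : 0 < c := by rw [hc]; positivity
  have hc1 : c ≤ 1 := by
    rw [hc]
    have h4 : c₁^4 ≤ 1 := pow_le_one₀ (le_of_lt hc₁0) hc₁1
    have : δ/C ≤ 1 := by
      rw [div_le_one hC0]; linarith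
    nlinarith [div_pos hδ0 hC0]
  have hc₂0 : 0 < c₂ := by rw [hc₂]; positivity
  have hnn : ∀ j : ℕ, 0 ≤ φ ((1/2:ℝ)^j) := fun j => hφnn _ (memIcc j)
  have hbm : φ ((1/2:ℝ)^m) ≤ C * φ 1 := by
    apply hC _ (memIcc _) 1 (by norm_num)
    exact pow_le_one₀ (by norm_num) (by norm_num)
  rcases le_or_gt q n with h | h
  · have hbn : φ ((1/2:ℝ)^n) ≤ C * φ ((1/2:ℝ)^q) := by
      apply hC _ (memIcc _) _ (memIcc _)
      exact pow_le_pow_of_le_one (by norm_num) (by norm_num) h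
    calc c₂ * (φ ((1/2:ℝ)^m) * φ ((1/2:ℝ)^n))
        ≤ c₂ * ((C * φ 1) * (C * φ ((1/2:ℝ)^q))) := by
          apply mul_le_mul_of_nonneg_left _ (le_of_lt hc₂0)
          apply mul_le_mul hbm hbn (hnn n) (by positivity)
      _ = c * φ ((1/2:ℝ)^q) := by rw [hc₂]; field_simp
      _ ≤ 1 * φ ((1/2:ℝ)^q) := mul_le_mul_of_nonneg_right hc1 (hnn q)
      _ = φ ((1/2:ℝ)^q) := one_mul _
  · have hL := bigL hC1 hC hφnn hhalf hδ0 hδ1 hδ hc₁ hc (le_of_lt h) (by omega)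
    calc c₂ * (φ ((1/2:ℝ)^m) * φ ((1/2:ℝ)^n))
        ≤ c₂ * ((C * φ 1) * φ ((1/2:ℝ)^n)) := by
          apply mul_le_mul_of_nonneg_left _ (le_of_lt hc₂0)
          exact mul_le_mul_of_nonneg_right hbm (hnn n)
      _ = (c / C) * φ ((1/2:ℝ)^n) := by rw [hc₂]; field_simp
      _ ≤ c * φ ((1/2:ℝ)^n) := by
          apply mul_le_mul_of_nonneg_right _ (hnn n)
          rw [div_le_iff₀ hC0]; nlinarith
      _ ≤ φ ((1/2:ℝ)^q) := hL

lemma Rmain (hC1 : 1 ≤ C)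
    (hC : ∀ x ∈ Icc (0:ℝ) 1, ∀ y ∈ Icc (0:ℝ) 1, x ≤ y → φ x ≤ C * φ y)
    (hφnn : ∀ t ∈ Icc (0:ℝ) 1, 0 ≤ φ t)
    (hhalf : 0 < φ (1/2)) (hδ0 : 0 < δ) (hδ1 : δ ≤ 1)
    (hδ : ∀ n : ℕ, δ * φ ((1/2:ℝ)^n) ≤ φ ((1/2:ℝ)^(2*n)))
    (hc₁ : c₁ = min (min (δ/C) (φ (1/2) / φ 1)) 1)
    (hc : c = c₁^4 * (δ/C))
    (hc₂ : c₂ = c / (C^2 * φ 1))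
    {m n q : ℕ} (hq : q ≤ m + n + 2) :
    c₂ * (φ ((1/2:ℝ)^m) * φ ((1/2:ℝ)^n)) ≤ φ ((1/2:ℝ)^q) := by
  rcases le_total m n with h | h
  · exact Rhelp hC1 hC hφnn hhalf hδ0 hδ1 hδ hc₁ hc hc₂ h hq
  · rw [mul_comm (φ ((1/2:ℝ)^m))]
    exact Rhelp hC1 hC hφnn hhalf hδ0 hδ1 hδ hc₁ hc hc₂ h (by omega)

lemma dyadic {y : ℝ} (hy0 : 0 < y) (hy1 : y ≤ 1) :
    ∃ m : ℕ, (1/2:ℝ)^(m+1) < y ∧ y ≤ (1/2:ℝ)^m := by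
  obtain ⟨n, hn⟩ := exists_pow_lt_of_lt_one hy0 (by norm_num : (1/2:ℝ) < 1)
  have hex : ∃ n : ℕ, (1/2:ℝ)^n < y := ⟨n, hn⟩
  classical
  set N := Nat.find hex with hN
  have hNlt : (1/2:ℝ)^N < y := Nat.find_spec hex
  have hNpos : 0 < N := by
    rcases Nat.eq_zero_or_pos N with h | h
    · exfalso; rw [h] at hNlt; simp at hNlt; linarith
    · exact h
  refine ⟨N - 1, ?_, ?_⟩
  · have : N - 1 + 1 = N := by omega
    rw [this]; exact hNlt
  · by_contra hcon
    push_neg at hcon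
    exact Nat.find_min hex (by omega : N - 1 < N) hcon

lemma posx (hC1 : 1 ≤ C)
    (hC : ∀ x ∈ Icc (0:ℝ) 1, ∀ y ∈ Icc (0:ℝ) 1, x ≤ y → φ x ≤ C * φ y)
    (hφnn : ∀ t ∈ Icc (0:ℝ) 1, 0 ≤ φ t)
    (hhalf : 0 < φ (1/2)) (hδ0 : 0 < δ)
    (hδ : ∀ n : ℕ, δ * φ ((1/2:ℝ)^n) ≤ φ ((1/2:ℝ)^(2*n)))
    {x : ℝ} (hx0 : 0 < x) (hx1 : x ≤ 1) : 0 < φ x := by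
  have hC0 : (0:ℝ) < C := lt_of_lt_of_le one_pos hC1
  obtain ⟨m, hm1, hm2⟩ := dyadic hx0 hx1
  have h := hC _ (memIcc (m+1)) x ⟨le_of_lt hx0, hx1⟩ (le_of_lt hm1)
  have := posn hC1 hC hφnn hhalf hδ0 hδ (m+1)
  nlinarith
end Aux4
section Aux5
variable {φ : ℝ → ℝ} {C δ c₁ c c₂ ε₀ : ℝ}

lemma Pmain (hC1 : 1 ≤ C)
    (hC : ∀ x ∈ Icc (0:ℝ) 1, ∀ y ∈ Icc (0:ℝ) 1, x ≤ y → φ x ≤ C * φ y)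
    (hφnn : ∀ t ∈ Icc (0:ℝ) 1, 0 ≤ φ t)
    (hhalf : 0 < φ (1/2)) (hδ0 : 0 < δ) (hδ1 : δ ≤ 1)
    (hδ : ∀ n : ℕ, δ * φ ((1/2:ℝ)^n) ≤ φ ((1/2:ℝ)^(2*n)))
    (hc₁ : c₁ = min (min (δ/C) (φ (1/2) / φ 1)) 1)
    (hc : c = c₁^4 * (δ/C))
    (hc₂ : c₂ = c / (C^2 * φ 1))
    (hε₀ : ε₀ = min (c₂/C^2) (1/(C^2 * φ 1)))
    {n : ℕ} {x y : ℝ} (hx : x ∈ Icc (0:ℝ) 1) (hy : y ∈ Icc (0:ℝ) 1)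
    (hlt : y / 2^(n+1) < x) :
    ε₀ * (φ y * φ ((1/2:ℝ)^n)) ≤ φ x := by
  have hC0 : (0:ℝ) < C := lt_of_lt_of_le one_pos hC1
  have h1' : 0 < φ 1 := phi1pos hC1 hC hhalf
  have hc₁0 : 0 < c₁ := by
    rw [hc₁]; simp only [lt_min_iff]
    exact ⟨⟨by positivity, by positivity⟩, one_pos⟩
  have hc0 : 0 < c := by rw [hc]; positivity
  have hc₂0 : 0 < c₂ := by rw [hc₂]; positivity
  have hε₀0 : 0 < ε₀ := by
    rw [hε₀]; simp only [lt_min_iff]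
    exact ⟨div_pos hc₂0 (by positivity), by positivity⟩
  have hnn : ∀ j : ℕ, 0 ≤ φ ((1/2:ℝ)^j) := fun j => hφnn _ (memIcc j)
  have hφx : 0 ≤ φ x := hφnn _ hx
  have hφy : 0 ≤ φ y := hφnn _ hy
  have hx0 : 0 < x := lt_of_le_of_lt (div_nonneg hy.1 (by positivity)) hlt
  rcases eq_or_lt_of_le hy.1 with hy0 | hy0
  · -- y = 0
    have hφ0x : φ y ≤ C * φ x := hC y hy x hx (by rw [← hy0]; exact hx.1)
    have hφn1 : φ ((1/2:ℝ)^n) ≤ C * φ 1 := by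
      apply hC _ (memIcc _) 1 (by norm_num)
      exact pow_le_one₀ (by norm_num) (by norm_num)
    have hε₀le : ε₀ ≤ 1/(C^2 * φ 1) := hε₀ ▸ min_le_right _ _
    have h2 : ε₀ * (C^2 * φ 1) ≤ 1 := by
      rw [← le_div_iff₀ (by positivity : (0:ℝ) < C^2 * φ 1)]
      exact hε₀le
    calc ε₀ * (φ y * φ ((1/2:ℝ)^n)) ≤ ε₀ * ((C * φ x) * (C * φ 1)) := by
          apply mul_le_mul_of_nonneg_left _ (le_of_lt hε₀0)
          exact mul_le_mul hφ0x hφn1 (hnn n) (by positivity)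
      _ = (ε₀ * (C^2 * φ 1)) * φ x := by ring
      _ ≤ 1 * φ x := mul_le_mul_of_nonneg_right h2 hφx
      _ = φ x := one_mul _
  · -- y > 0
    obtain ⟨m, hm1, hm2⟩ := dyadic hy0 hy.2
    obtain ⟨p, hp1, hp2⟩ := dyadic hx0 hx.2
    have hpm : p + 1 ≤ m + n + 2 := by
      by_contra hcon
      push_neg at hcon
      have h1 : x ≤ (1/2:ℝ)^(m+n+2) := by
        calc x ≤ (1/2:ℝ)^p := hp2
          _ ≤ (1/2:ℝ)^(m+n+2) := pow_le_pow_of_le_one (by norm_num) (by norm_num) (by omega)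
      have h2 : (1/2:ℝ)^(m+n+2) < x := by
        have e : (1/2:ℝ)^(m+n+2) = (1/2:ℝ)^(m+1) / 2^(n+1) := by
          rw [div_pow, one_pow, pow_add]
          field_simp
          have h2m : (1/2:ℝ)^m * 2^m = 1 := by rw [← mul_pow]; norm_num
          linear_combination (-(2^n*2:ℝ)) * h2m
        rw [e]
        calc (1/2:ℝ)^(m+1) / 2^(n+1) < y / 2^(n+1) := by gcongr
          _ < x := hlt
      linarith
    have hR := Rmain hC1 hC hφnn hhalf hδ0 hδ1 hδ hc₁ hc hc₂ (q := p+1) (m := m) (n := n) hpm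
    have hpx : φ ((1/2:ℝ)^(p+1)) ≤ C * φ x := hC _ (memIcc _) x hx (le_of_lt hp1)
    have hym : φ y ≤ C * φ ((1/2:ℝ)^m) := hC y hy _ (memIcc m) hm2
    have hε₀le : ε₀ ≤ c₂/C^2 := hε₀ ▸ min_le_left _ _
    have hmn0 : (0:ℝ) ≤ (C * φ ((1/2:ℝ)^m)) * φ ((1/2:ℝ)^n) :=
      mul_nonneg (mul_nonneg (le_of_lt hC0) (hnn m)) (hnn n)
    calc ε₀ * (φ y * φ ((1/2:ℝ)^n))
        ≤ ε₀ * ((C * φ ((1/2:ℝ)^m)) * φ ((1/2:ℝ)^n)) :=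
          mul_le_mul_of_nonneg_left (mul_le_mul_of_nonneg_right hym (hnn n)) (le_of_lt hε₀0)
      _ ≤ (c₂/C^2) * ((C * φ ((1/2:ℝ)^m)) * φ ((1/2:ℝ)^n)) :=
          mul_le_mul_of_nonneg_right hε₀le hmn0
      _ = (c₂ * (φ ((1/2:ℝ)^m) * φ ((1/2:ℝ)^n))) / C := by field_simp
      _ ≤ (C * φ x) / C := by gcongr ?_ / C; exact le_trans hR hpx
      _ = φ x := by field_simp
end Aux5
section Aux6
variable {φ : ℝ → ℝ} {C δ c₁ c K₂ : ℝ}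

lemma doubling (hC1 : 1 ≤ C)
    (hC : ∀ x ∈ Icc (0:ℝ) 1, ∀ y ∈ Icc (0:ℝ) 1, x ≤ y → φ x ≤ C * φ y)
    (hφnn : ∀ t ∈ Icc (0:ℝ) 1, 0 ≤ φ t)
    (hhalf : 0 < φ (1/2)) (hδ0 : 0 < δ) (hδ1 : δ ≤ 1)
    (hδ : ∀ n : ℕ, δ * φ ((1/2:ℝ)^n) ≤ φ ((1/2:ℝ)^(2*n)))
    (hc₁ : c₁ = min (min (δ/C) (φ (1/2) / φ 1)) 1)
    (hc : c = c₁^4 * (δ/C))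
    (hK₂ : K₂ = max (C^2 * φ 1 / φ (1/2)) (C^2/c))
    {a : ℝ} (ha : a ∈ Icc (0:ℝ) 1) :
    φ (min (2*a) 1) ≤ K₂ * φ a := by
  have hC0 : (0:ℝ) < C := lt_of_lt_of_le one_pos hC1
  have h1' : 0 < φ 1 := phi1pos hC1 hC hhalf
  have hc₁0 : 0 < c₁ := by
    rw [hc₁]; simp only [lt_min_iff]
    exact ⟨⟨by positivity, by positivity⟩, one_pos⟩
  have hc₁1 : c₁ ≤ 1 := hc₁ ▸ min_le_right _ _
  have hc0 : 0 < c := by rw [hc]; positivity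
  have hc1 : c ≤ 1 := by
    rw [hc]
    have h4 : c₁^4 ≤ 1 := pow_le_one₀ (le_of_lt hc₁0) hc₁1
    have h5 : δ/C ≤ 1 := by rw [div_le_one hC0]; linarith
    nlinarith [div_pos hδ0 hC0]
  have hK₂1 : 1 ≤ K₂ := by
    rw [hK₂]
    have : (1:ℝ) ≤ C^2/c := by
      rw [le_div_iff₀ hc0]; nlinarith
    exact le_trans this (le_max_right _ _)
  have humem : min (2*a) 1 ∈ Icc (0:ℝ) 1 := by
    constructor
    · exact le_min (by nlinarith [ha.1]) (by norm_num)
    · exact min_le_right _ _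
  rcases eq_or_lt_of_le ha.1 with ha0 | ha0
  · -- a = 0
    have : min (2*a) 1 = a := by rw [← ha0]; norm_num
    rw [this]
    nlinarith [hφnn a ha]
  · obtain ⟨m, hm1, hm2⟩ := dyadic ha0 ha.2
    match m, hm1, hm2 with
    | 0, hm1, hm2 =>
      have hu1 : φ (min (2*a) 1) ≤ C * φ 1 := hC _ humem 1 (by norm_num) (min_le_right _ _)
      have hha : φ (1/2) ≤ C * φ a := by
        apply hC _ (by norm_num) a ha
        simpa using le_of_lt hm1
      have hKle : C^2 * φ 1 / φ (1/2) ≤ K₂ := hK₂ ▸ le_max_left _ _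
      have hφa : 0 ≤ φ a := hφnn a ha
      calc φ (min (2*a) 1) ≤ C * φ 1 := hu1
        _ = (C^2 * φ 1 / φ (1/2)) * (φ (1/2) / C) := by field_simp
        _ ≤ K₂ * φ a := by
          apply mul_le_mul hKle _ _ (le_trans zero_le_one hK₂1)
          · rw [div_le_iff₀ hC0]; linarith
          · positivity
    | k+1, hm1, hm2 =>
      have hu2 : min (2*a) 1 ≤ (1/2:ℝ)^k := by
        apply le_trans (min_le_left _ _)
        calc 2*a ≤ 2*(1/2:ℝ)^(k+1) := by linarith
          _ = (1/2:ℝ)^k := by ring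
      have hu3 : φ (min (2*a) 1) ≤ C * φ ((1/2:ℝ)^k) := hC _ humem _ (memIcc k) hu2
      have hL : c * φ ((1/2:ℝ)^k) ≤ φ ((1/2:ℝ)^(k+2)) :=
        bigL hC1 hC hφnn hhalf hδ0 hδ1 hδ hc₁ hc (by omega) (by omega)
      have hph : φ ((1/2:ℝ)^(k+2)) ≤ C * φ a := hC _ (memIcc _) a ha (le_of_lt hm1)
      have hKle : C^2/c ≤ K₂ := hK₂ ▸ le_max_right _ _
      have hφa : 0 ≤ φ a := hφnn a ha
      calc φ (min (2*a) 1) ≤ C * φ ((1/2:ℝ)^k) := hu3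
        _ = (C/c) * (c * φ ((1/2:ℝ)^k)) := by field_simp
        _ ≤ (C/c) * (C * φ a) := by
          apply mul_le_mul_of_nonneg_left (le_trans hL hph) (by positivity)
        _ = (C^2/c) * φ a := by field_simp
        _ ≤ K₂ * φ a := mul_le_mul_of_nonneg_right hKle hφa

lemma Tbound {α : ℝ} (hα : 1 ≤ α) (hC1 : 1 ≤ C)
    (hC : ∀ x ∈ Icc (0:ℝ) 1, ∀ y ∈ Icc (0:ℝ) 1, x ≤ y → φ x ≤ C * φ y)
    (hφnn : ∀ t ∈ Icc (0:ℝ) 1, 0 ≤ φ t)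
    (hhalf : 0 < φ (1/2)) (hδ0 : 0 < δ) (hδ1 : δ ≤ 1)
    (hδ : ∀ n : ℕ, δ * φ ((1/2:ℝ)^n) ≤ φ ((1/2:ℝ)^(2*n)))
    (hc₁ : c₁ = min (min (δ/C) (φ (1/2) / φ 1)) 1)
    (hc : c = c₁^4 * (δ/C))
    (hK₂ : K₂ = max (C^2 * φ 1 / φ (1/2)) (C^2/c))
    {a b s : ℝ} (ha : a ∈ Icc (0:ℝ) 1) (hb : b ∈ Icc (0:ℝ) 1) (hs : s ∈ Icc (0:ℝ) 1)
    (hsab : s ≤ a + b) :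
    s^α * φ s ≤ ((2:ℝ)^α * C * K₂) * (a^α * φ a + b^α * φ b) := by
  have hC0 : (0:ℝ) < C := lt_of_lt_of_le one_pos hC1
  set a' := max a b with ha'
  have ha'mem : a' ∈ Icc (0:ℝ) 1 := ⟨le_trans ha.1 (le_max_left _ _), max_le ha.2 hb.2⟩
  set u := min (2*a') 1 with hu
  have humem : u ∈ Icc (0:ℝ) 1 :=
    ⟨le_min (by nlinarith [ha'mem.1]) (by norm_num), min_le_right _ _⟩
  have hsu : s ≤ u := by
    apply le_min _ hs.2
    calc s ≤ a + b := hsab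
      _ ≤ a' + a' := add_le_add (le_max_left a b) (le_max_right a b)
      _ = 2*a' := by ring
  have hφsu : φ s ≤ C * φ u := hC s hs u humem hsu
  have hD := doubling hC1 hC hφnn hhalf hδ0 hδ1 hδ hc₁ hc hK₂ ha'mem
  have hφs : φ s ≤ (C * K₂) * φ a' := by
    calc φ s ≤ C * φ u := hφsu
      _ ≤ C * (K₂ * φ a') := mul_le_mul_of_nonneg_left hD (le_of_lt hC0)
      _ = (C * K₂) * φ a' := by ring
  have hsα : s^α ≤ 2^α * a'^α := by
    calc s^α ≤ (2*a')^α := by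
          apply Real.rpow_le_rpow hs.1 _ (by linarith)
          calc s ≤ u := hsu
            _ ≤ 2*a' := min_le_left _ _
      _ = 2^α * a'^α := Real.mul_rpow (by norm_num) ha'mem.1
  have hφsnn : 0 ≤ φ s := hφnn s hs
  have key : s^α * φ s ≤ (2^α * a'^α) * ((C * K₂) * φ a') := by
    apply mul_le_mul hsα hφs hφsnn
    exact mul_nonneg (Real.rpow_nonneg (by norm_num) α) (Real.rpow_nonneg ha'mem.1 α)
  have hK₂0 : 0 < K₂ := by
    have : (0:ℝ) < C^2 * φ 1 / φ (1/2) := by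
      have := phi1pos hC1 hC hhalf; positivity
    exact lt_of_lt_of_le this (hK₂ ▸ le_max_left _ _)
  have hfa' : a'^α * φ a' ≤ a^α * φ a + b^α * φ b := by
    rcases max_choice a b with h | h
    · rw [ha', h]
      have : 0 ≤ b^α * φ b := mul_nonneg (Real.rpow_nonneg hb.1 α) (hφnn b hb)
      linarith
    · rw [ha', h]
      have : 0 ≤ a^α * φ a := mul_nonneg (Real.rpow_nonneg ha.1 α) (hφnn a ha)
      linarith
  calc s^α * φ s ≤ (2^α * a'^α) * ((C * K₂) * φ a') := key
    _ = ((2:ℝ)^α * C * K₂) * (a'^α * φ a') := by ring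
    _ ≤ ((2:ℝ)^α * C * K₂) * (a^α * φ a + b^α * φ b) := by
        apply mul_le_mul_of_nonneg_left hfa'
        positivity
end Aux6


theorem stmt3 (α : ℝ) (hα : 1 ≤ α) (φ : ℝ → ℝ)
    (hφnn : ∀ t ∈ Icc (0:ℝ) 1, 0 ≤ φ t)
    (hφei : EssIncOn φ (Icc 0 1)) (hhalf : 0 < φ (1/2))
    (hδ : ∃ δ > (0:ℝ), ∀ n : ℕ, δ * φ ((1/2:ℝ)^n) ≤ φ ((1/2:ℝ)^(2*n))) :
    Equivalence (EF (fun t => t ^ α * φ t)) ∧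
    ∃ ε > (0:ℝ), ∃ M : ℕ, ∀ n > M, ∀ x ∈ Icc (0:ℝ) 1, ∀ y ∈ Icc (0:ℝ) 1,
      φ x ≤ ε * φ y * φ ((1/2:ℝ)^n) → x ≤ y / 2^(n+1) := by
  obtain ⟨C, hC1, hC⟩ := hφei
  obtain ⟨δ₀, hδ₀0, hδ₀⟩ := hδ
  set δ := min δ₀ 1 with hδdef
  have hδ0 : 0 < δ := lt_min hδ₀0 one_pos
  have hδ1 : δ ≤ 1 := min_le_right _ _
  have hδs : ∀ n : ℕ, δ * φ ((1/2:ℝ)^n) ≤ φ ((1/2:ℝ)^(2*n)) := by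
    intro n
    have hnn : 0 ≤ φ ((1/2:ℝ)^n) := hφnn _ (memIcc n)
    calc δ * φ ((1/2:ℝ)^n) ≤ δ₀ * φ ((1/2:ℝ)^n) :=
          mul_le_mul_of_nonneg_right (min_le_left _ _) hnn
      _ ≤ _ := hδ₀ n
  have hC0 : (0:ℝ) < C := lt_of_lt_of_le one_pos hC1
  have h1' : 0 < φ 1 := phi1pos hC1 hC hhalf
  set c₁ := min (min (δ/C) (φ (1/2) / φ 1)) 1 with hc₁
  set c := c₁^4 * (δ/C) with hc
  set c₂ := c / (C^2 * φ 1) with hc₂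
  set ε₀ := min (c₂/C^2) (1/(C^2 * φ 1)) with hε₀
  set K₂ := max (C^2 * φ 1 / φ (1/2)) (C^2/c) with hK₂
  have hc₁0 : 0 < c₁ := by
    rw [hc₁]; simp only [lt_min_iff]
    exact ⟨⟨by positivity, by positivity⟩, one_pos⟩
  have hc0 : 0 < c := by rw [hc]; positivity
  have hc₂0 : 0 < c₂ := by rw [hc₂]; positivity
  have hε₀0 : 0 < ε₀ := by
    rw [hε₀]; simp only [lt_min_iff]
    exact ⟨div_pos hc₂0 (by positivity), by positivity⟩
  constructor
  · -- equivalence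
    constructor
    · intro x
      unfold EF
      have he : (fun n => (fun t => t ^ α * φ t) |(x n : ℝ) - (x n : ℝ)|)
          = fun _ => (0:ℝ) := by
        funext n
        simp only [sub_self, abs_zero]
        rw [Real.zero_rpow (by linarith : α ≠ 0), zero_mul]
      rw [he]
      exact summable_zero
    · intro x y h
      unfold EF at *
      simpa [abs_sub_comm] using h
    · intro x y z hxy hyz
      unfold EF at *
      refine Summable.of_nonneg_of_le ?_ ?_ ((hxy.add hyz).mul_left ((2:ℝ)^α * C * K₂))
      · intro n
        exact mul_nonneg (Real.rpow_nonneg (abs_nonneg _) α)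
          (hφnn _ (absmem (x n).2 (z n).2))
      · intro n
        exact Tbound hα hC1 hC hφnn hhalf hδ0 hδ1 hδs hc₁ hc hK₂
          (absmem (x n).2 (y n).2) (absmem (y n).2 (z n).2)
          (absmem (x n).2 (z n).2) (abs_sub_le _ _ _)
  · -- part 2
    refine ⟨ε₀/2, by positivity, 0, ?_⟩
    intro n hn x hx y hy hle
    by_contra hcon
    push_neg at hcon
    have hP := Pmain hC1 hC hφnn hhalf hδ0 hδ1 hδs hc₁ hc hc₂ hε₀ hx hy hcon
    have hφnpos : 0 < φ ((1/2:ℝ)^n) := posn hC1 hC hφnn hhalf hδ0 hδs n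
    have hφy : 0 ≤ φ y := hφnn _ hy
    have hA : φ y * φ ((1/2:ℝ)^n) = 0 := by
      have h1 : ε₀ * (φ y * φ ((1/2:ℝ)^n)) ≤ (ε₀/2) * (φ y * φ ((1/2:ℝ)^n)) := by
        calc ε₀ * (φ y * φ ((1/2:ℝ)^n)) ≤ φ x := hP
          _ ≤ ε₀/2 * φ y * φ ((1/2:ℝ)^n) := hle
          _ = (ε₀/2) * (φ y * φ ((1/2:ℝ)^n)) := by ring
      nlinarith [mul_nonneg hφy (le_of_lt hφnpos)]
    have hφy0 : φ y = 0 := by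
      rcases mul_eq_zero.mp hA with h | h
      · exact h
      · exact absurd h (ne_of_gt hφnpos)
    have hφx0 : φ x = 0 := by
      have h1 : φ x ≤ 0 := by
        calc φ x ≤ ε₀/2 * φ y * φ ((1/2:ℝ)^n) := hle
          _ = 0 := by rw [hφy0]; ring
      linarith [hφnn x hx]
    have hx0 : 0 < x := lt_of_le_of_lt (div_nonneg hy.1 (by positivity)) hcon
    have := posx hC1 hC hφnn hhalf hδ0 hδs hx0 hx.2
    linarith
end

section
/- Let 1 ≤ α < ∞ and let φ, ψ : [0,1] → [0,∞), where φ is essentially increasing on [0,1] and there is δ > 0 such that φ(1/2^{n+1}) ≥ δ·φ(1/2^n) for every n < ω. Set f(x) = x^α·φ(x) and g(x) = x^α·ψ(x) for x ∈ [0,1]; suppose f and g are continuous and essentially increasing on [0,1] and that E_f and E_g are equivalence relations on [0,1]^ω. Assume there is μ : ω → [0,∞) with μ(n) ≤ 2^n for every n, and there is L ≥ 1 such that for every n < ω: Σ_{i=0}^∞ (μ(n+i)^α/2^{iα})·ψ(μ(n+i)/2^{n+i}) ≤ L·Σ_{i=0}^n μ(i)^α·ψ(μ(i)/2^n), and for every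 n ≥ 1, μ(n) ≤ L·max_{i<n} μ(i). If (φ(1/2^n))_{n<ω} ≈ (Σ_{i=0}^n μ(i)^α·ψ(μ(i)/2^n))_{n<ω}, then E_f ≤_B E_g. -/
open Set

/-- A trapezoidal bump: 0 for `x ≤ c`, rises linearly with slope `4/E` on `[c, c+E/4]`,
equals 1 on `[c+E/4, c+3E/4]`, falls back to 0 on `[c+3E/4, c+E]`. -/
noncomputable def trap (E c x : ℝ) : ℝ :=
  max 0 (min (min ((x - c)/(E/4)) ((c + E - x)/(E/4))) 1)

lemma trap_nonneg (E c x : ℝ) : 0 ≤ trap E c x := le_max_left _ _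

lemma trap_le_one (E c x : ℝ) : trap E c x ≤ 1 :=
  max_le (by norm_num) (min_le_right _ _)

lemma trap_continuous (E c : ℝ) : Continuous (fun x => trap E c x) := by
  unfold trap
  exact continuous_const.max ((((continuous_id.sub continuous_const).div_const _).min
    ((continuous_const.sub continuous_id).div_const _)).min continuous_const)

lemma trap_eq_zero_left {E c x : ℝ} (hE : 0 < E) (hx : x ≤ c) : trap E c x = 0 := by
  have h4 : (0:ℝ) < E/4 := by linarith
  have h1 : (x - c)/(E/4) ≤ 0 := div_nonpos_of_nonpos_of_nonneg (by linarith) h4.le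
  have hm : min (min ((x - c)/(E/4)) ((c + E - x)/(E/4))) 1 ≤ 0 :=
    le_trans (le_trans (min_le_left _ _) (min_le_left _ _)) h1
  exact max_eq_left hm

lemma trap_eq_zero_right {E c x : ℝ} (hE : 0 < E) (hx : c + E ≤ x) : trap E c x = 0 := by
  have h4 : (0:ℝ) < E/4 := by linarith
  have h1 : (c + E - x)/(E/4) ≤ 0 := div_nonpos_of_nonpos_of_nonneg (by linarith) h4.le
  have hm : min (min ((x - c)/(E/4)) ((c + E - x)/(E/4))) 1 ≤ 0 :=
    le_trans (le_trans (min_le_left _ _) (min_le_right _ _)) h1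
  exact max_eq_left hm

lemma trap_eq_rise {E c x : ℝ} (hE : 0 < E) (h1 : c ≤ x) (h2 : x ≤ c + E/4) :
    trap E c x = (x - c)/(E/4) := by
  have h4 : (0:ℝ) < E/4 := by linarith
  have hA0 : 0 ≤ (x - c)/(E/4) := div_nonneg (by linarith) h4.le
  have hA1 : (x - c)/(E/4) ≤ 1 := (div_le_one h4).mpr (by linarith)
  have hB : 1 ≤ (c + E - x)/(E/4) := (le_div_iff₀ h4).mpr (by linarith)
  rw [trap, min_eq_left (le_trans hA1 hB), min_eq_left hA1, max_eq_right hA0]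

lemma trap_eq_one {E c x : ℝ} (hE : 0 < E) (h1 : c + E/4 ≤ x) (h2 : x ≤ c + 3*E/4) :
    trap E c x = 1 := by
  have h4 : (0:ℝ) < E/4 := by linarith
  have hA : 1 ≤ (x - c)/(E/4) := (le_div_iff₀ h4).mpr (by linarith)
  have hB : 1 ≤ (c + E - x)/(E/4) := (le_div_iff₀ h4).mpr (by linarith)
  rw [trap, min_eq_right (le_min hA hB), max_eq_right (by norm_num)]

lemma trap_ge_half {E c x : ℝ} (hE : 0 < E) (h1 : c + E/8 ≤ x) (h2 : x ≤ c + 3*E/4) :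
    1/2 ≤ trap E c x := by
  have h4 : (0:ℝ) < E/4 := by linarith
  have hA : 1/2 ≤ (x - c)/(E/4) := (le_div_iff₀ h4).mpr (by linarith)
  have hB : 1/2 ≤ (c + E - x)/(E/4) := (le_div_iff₀ h4).mpr (by linarith)
  exact le_trans (le_min (le_min hA hB) (by norm_num)) (le_max_right _ _)

lemma trap_lip {E c : ℝ} (hE : 0 < E) (x y : ℝ) :
    |trap E c x - trap E c y| ≤ |x - y|/(E/4) := by
  have h4 : (0:ℝ) < E/4 := by linarith
  have hA : |(x - c)/(E/4) - (y - c)/(E/4)| = |x - y|/(E/4) := by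
    rw [div_sub_div_same, abs_div, abs_of_pos h4]; ring_nf
  have hB : |(c + E - x)/(E/4) - (c + E - y)/(E/4)| = |x - y|/(E/4) := by
    rw [div_sub_div_same, abs_div, abs_of_pos h4, abs_sub_comm]; ring_nf
  calc |trap E c x - trap E c y|
      ≤ max |(0:ℝ) - 0| |min (min ((x - c)/(E/4)) ((c + E - x)/(E/4))) 1
          - min (min ((y - c)/(E/4)) ((c + E - y)/(E/4))) 1| := abs_max_sub_max_le_max _ _ _ _
    _ ≤ |min (min ((x - c)/(E/4)) ((c + E - x)/(E/4))) 1
          - min (min ((y - c)/(E/4)) ((c + E - y)/(E/4))) 1| := by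
          simp
    _ ≤ max |min ((x - c)/(E/4)) ((c + E - x)/(E/4)) - min ((y - c)/(E/4)) ((c + E - y)/(E/4))|
          |(1:ℝ) - 1| := abs_min_sub_min_le_max _ _ _ _
    _ ≤ |min ((x - c)/(E/4)) ((c + E - x)/(E/4)) - min ((y - c)/(E/4)) ((c + E - y)/(E/4))| := by
          simp
    _ ≤ max |(x - c)/(E/4) - (y - c)/(E/4)| |(c + E - x)/(E/4) - (c + E - y)/(E/4)| :=
          abs_min_sub_min_le_max _ _ _ _
    _ ≤ |x - y|/(E/4) := by rw [hA, hB]; simp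


/-- The `j`-th trapezoid at scale `k`: grid spacing `2^{-k}/16`, width `2^{-k}`. -/
noncomputable def tau (k j : ℕ) (x : ℝ) : ℝ :=
  trap ((2:ℝ)^k)⁻¹ ((j:ℝ) * (((2:ℝ)^k)⁻¹/16) - ((2:ℝ)^k)⁻¹) x

/-- grid points `j·(E/16) − E`, `j : ℕ`, are `E/16`-dense in `[-E, ∞)`. -/
lemma exists_grid {E : ℝ} (hE : 0 < E) {a b : ℝ} (ha : -E ≤ a) (hab : a + E/16 ≤ b) :
    ∃ j : ℕ, a ≤ (j:ℝ) * (E/16) - E ∧ (j:ℝ) * (E/16) - E ≤ b := by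
  have hδ : (0:ℝ) < E/16 := by linarith
  refine ⟨⌈(a + E)/(E/16)⌉₊, ?_, ?_⟩
  · have h := Nat.le_ceil ((a + E)/(E/16))
    rw [div_le_iff₀ hδ] at h
    linarith
  · have h0 : 0 ≤ (a + E)/(E/16) := div_nonneg (by linarith) hδ.le
    have h := Nat.ceil_lt_add_one h0
    have h2 : (⌈(a + E)/(E/16)⌉₊:ℝ) * (E/16) < ((a + E)/(E/16) + 1) * (E/16) :=
      mul_lt_mul_of_pos_right h hδ
    have h3 : ((a + E)/(E/16)) * (E/16) = a + E := div_mul_cancel₀ _ hδ.ne'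
    nlinarith

lemma exists_big' {E En : ℝ} (hE : 0 < E) (hEn : 0 < En)
    (hor : En ≤ E/2 ∨ En = E)
    {s t : ℝ} (hs : 0 ≤ s) (hst : s ≤ t) (h1 : En/2 ≤ t - s) (h2 : t - s ≤ En) :
    ∃ j : ℕ, En ≤ E * |trap E ((j:ℝ)*(E/16) - E) t - trap E ((j:ℝ)*(E/16) - E) s| := by
  have hEnE : En ≤ E := by rcases hor with h | h <;> linarith
  by_cases hcase : 5*E/16 ≤ t - s
  · -- full height
    have hmax : max s (t - 3*E/4) ≤ t - E/4 - E/16 := max_le (by linarith) (by linarith)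
    obtain ⟨j, hj1, hj2⟩ := exists_grid hE (a := max s (t - 3*E/4)) (b := t - E/4)
      (le_trans (by linarith) (le_max_left _ _)) (by linarith)
    refine ⟨j, ?_⟩
    have hsc : s ≤ (j:ℝ)*(E/16) - E := le_trans (le_max_left _ _) hj1
    have htc : t - 3*E/4 ≤ (j:ℝ)*(E/16) - E := le_trans (le_max_right _ _) hj1
    have ht1 : trap E ((j:ℝ)*(E/16) - E) t = 1 := trap_eq_one hE (by linarith) (by linarith)
    have hs0 : trap E ((j:ℝ)*(E/16) - E) s = 0 := trap_eq_zero_left hE hsc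
    rw [ht1, hs0]
    simp only [sub_zero, abs_one, mul_one]
    exact hEnE
  · push_neg at hcase
    have hEn2 : En ≤ E/2 := by
      rcases hor with h | h
      · exact h
      · exfalso; rw [h] at h1; linarith
    by_cases hcase2 : t - s ≤ 3*E/16
    · -- both on one rising branch
      obtain ⟨j, hj1, hj2⟩ := exists_grid hE (a := t - E/4) (b := s)
        (by linarith) (by linarith)
      refine ⟨j, ?_⟩
      have hts : trap E ((j:ℝ)*(E/16) - E) s = (s - ((j:ℝ)*(E/16) - E))/(E/4) :=
        trap_eq_rise hE hj2 (by linarith)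
      have htt : trap E ((j:ℝ)*(E/16) - E) t = (t - ((j:ℝ)*(E/16) - E))/(E/4) :=
        trap_eq_rise hE (by linarith) (by linarith)
      rw [hts, htt, div_sub_div_same]
      have heq : t - ((j:ℝ)*(E/16) - E) - (s - ((j:ℝ)*(E/16) - E)) = t - s := by ring
      rw [heq, abs_of_nonneg (div_nonneg (by linarith) (by linarith))]
      have hmul : E * ((t - s)/(E/4)) = 4*(t - s) := by field_simp
      rw [hmul]; linarith
    · push_neg at hcase2
      have hmax : max s (t - 3*E/4) ≤ t - E/8 - E/16 := max_le (by linarith) (by linarith)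
      obtain ⟨j, hj1, hj2⟩ := exists_grid hE (a := max s (t - 3*E/4)) (b := t - E/8)
        (le_trans (by linarith) (le_max_left _ _)) (by linarith)
      refine ⟨j, ?_⟩
      have hsc : s ≤ (j:ℝ)*(E/16) - E := le_trans (le_max_left _ _) hj1
      have htc : t - 3*E/4 ≤ (j:ℝ)*(E/16) - E := le_trans (le_max_right _ _) hj1
      have ht1 : 1/2 ≤ trap E ((j:ℝ)*(E/16) - E) t := trap_ge_half hE (by linarith) (by linarith)
      have hs0 : trap E ((j:ℝ)*(E/16) - E) s = 0 := trap_eq_zero_left hE hsc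
      rw [hs0, sub_zero, abs_of_nonneg (trap_nonneg _ _ _)]
      nlinarith [trap_nonneg E ((j:ℝ)*(E/16) - E) t]

lemma exists_big {k n : ℕ} (hkn : k ≤ n) {s t : ℝ} (hs : 0 ≤ s) (hst : s ≤ t)
    (h1 : ((2:ℝ)^(n+1))⁻¹ ≤ t - s) (h2 : t - s ≤ ((2:ℝ)^n)⁻¹) :
    ∃ j : ℕ, ((2:ℝ)^n)⁻¹ ≤ ((2:ℝ)^k)⁻¹ * |tau k j t - tau k j s| := by
  have hE : (0:ℝ) < ((2:ℝ)^k)⁻¹ := by positivity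
  have hEn : (0:ℝ) < ((2:ℝ)^n)⁻¹ := by positivity
  have h1' : ((2:ℝ)^n)⁻¹/2 ≤ t - s := by
    have : ((2:ℝ)^(n+1))⁻¹ = ((2:ℝ)^n)⁻¹/2 := by rw [pow_succ, mul_inv]; ring
    linarith [this ▸ h1]
  have hor : ((2:ℝ)^n)⁻¹ ≤ ((2:ℝ)^k)⁻¹/2 ∨ ((2:ℝ)^n)⁻¹ = ((2:ℝ)^k)⁻¹ := by
    rcases lt_or_eq_of_le hkn with h | h
    · left
      have : ((2:ℝ)^(k+1))⁻¹ = ((2:ℝ)^k)⁻¹/2 := by rw [pow_succ, mul_inv]; ring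
      rw [← this]
      exact inv_anti₀ (by positivity) (pow_le_pow_right₀ one_le_two h)
    · right; rw [h]
  exact exists_big' hE hEn hor hs hst h1' h2

lemma tau_eq_zero_of_not_mem_window {k j : ℕ} {x : ℝ} (hx : 0 ≤ x)
    (hj : j ∉ Finset.Icc ⌊x * (16 * 2^k)⌋₊ (⌊x * (16 * 2^k)⌋₊ + 16)) :
    tau k j x = 0 := by
  have hE : (0:ℝ) < ((2:ℝ)^k)⁻¹ := by positivity
  have h16 : (0:ℝ) < 16 * 2^k := by positivity
  by_cases h1 : x ≤ (j:ℝ) * (((2:ℝ)^k)⁻¹/16) - ((2:ℝ)^k)⁻¹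
  · exact trap_eq_zero_left hE h1
  by_cases h2 : (j:ℝ) * (((2:ℝ)^k)⁻¹/16) - ((2:ℝ)^k)⁻¹ + ((2:ℝ)^k)⁻¹ ≤ x
  · exact trap_eq_zero_right hE h2
  exfalso
  push_neg at h1 h2
  have hkey1 : x * (16 * 2^k) < j := by
    have heq : (j:ℝ) * (((2:ℝ)^k)⁻¹/16) - ((2:ℝ)^k)⁻¹ + ((2:ℝ)^k)⁻¹
        = (j:ℝ) * (((2:ℝ)^k)⁻¹/16) := by ring
    rw [heq] at h2
    have h2' : x * (16 * 2^k) < ((j:ℝ) * (((2:ℝ)^k)⁻¹/16)) * (16 * 2^k) :=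
      mul_lt_mul_of_pos_right h2 h16
    have hone : (((2:ℝ)^k)⁻¹/16) * (16 * 2^k) = 1 := by
      have : ((2:ℝ)^k) ≠ 0 := by positivity
      field_simp
    have heq2 : ((j:ℝ) * (((2:ℝ)^k)⁻¹/16)) * (16 * 2^k) = j := by
      rw [mul_assoc, hone, mul_one]
    linarith [heq2 ▸ h2']
  have hkey2 : (j:ℝ) < x * (16 * 2^k) + 16 := by
    have h1' : ((j:ℝ) * (((2:ℝ)^k)⁻¹/16) - ((2:ℝ)^k)⁻¹) * (16 * 2^k) < x * (16 * 2^k) :=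
      mul_lt_mul_of_pos_right h1 h16
    have heq : ((j:ℝ) * (((2:ℝ)^k)⁻¹/16) - ((2:ℝ)^k)⁻¹) * (16 * 2^k) = (j:ℝ) - 16 := by
      field_simp
    linarith [heq ▸ h1']
  apply hj
  rw [Finset.mem_Icc]
  constructor
  · have hfl := Nat.floor_le (mul_nonneg hx h16.le)
    have hlt : (⌊x * (16 * 2^k)⌋₊ : ℝ) < j := lt_of_le_of_lt hfl hkey1
    have : ⌊x * (16 * 2^k)⌋₊ < j := by exact_mod_cast hlt
    exact this.le
  · have h3 := Nat.lt_floor_add_one (x * (16 * 2^k))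
    have h4 : (j:ℝ) < (⌊x * (16 * 2^k)⌋₊ : ℝ) + 17 := by linarith
    have h5 : j < ⌊x * (16 * 2^k)⌋₊ + 17 := by exact_mod_cast h4
    omega

lemma find_scale {d : ℝ} (h0 : 0 < d) (h1 : d ≤ 1) :
    ∃ n : ℕ, ((2:ℝ)^(n+1))⁻¹ ≤ d ∧ d ≤ ((2:ℝ)^n)⁻¹ := by
  classical
  have hex : ∃ m : ℕ, ((2:ℝ)^m)⁻¹ < d := by
    obtain ⟨m, hm⟩ := exists_pow_lt_of_lt_one h0 (by norm_num : (1/2:ℝ) < 1)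
    refine ⟨m, ?_⟩
    have heq : ((1:ℝ)/2)^m = ((2:ℝ)^m)⁻¹ := by rw [one_div, inv_pow]
    rwa [heq] at hm
  have hspec : ((2:ℝ)^(Nat.find hex))⁻¹ < d := Nat.find_spec hex
  have hn0 : Nat.find hex ≠ 0 := by
    intro h
    rw [h] at hspec
    simp at hspec
    linarith
  obtain ⟨n, hn⟩ := Nat.exists_eq_succ_of_ne_zero hn0
  refine ⟨n, ?_, ?_⟩
  · have : n + 1 = Nat.find hex := by omega
    rw [this]; exact hspec.le
  · exact le_of_not_gt (Nat.find_min hex (by omega))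

lemma tau_nonneg (k j : ℕ) (x : ℝ) : 0 ≤ tau k j x := trap_nonneg _ _ _
lemma tau_le_one (k j : ℕ) (x : ℝ) : tau k j x ≤ 1 := trap_le_one _ _ _
lemma tau_continuous (k j : ℕ) : Continuous (tau k j) := trap_continuous _ _

lemma tau_abs_le_one (k j : ℕ) (x y : ℝ) : |tau k j x - tau k j y| ≤ 1 := by
  rw [abs_sub_le_iff]
  constructor <;>
    linarith [tau_nonneg k j x, tau_le_one k j x, tau_nonneg k j y, tau_le_one k j y]

lemma tau_lip (k j : ℕ) (x y : ℝ) : |tau k j x - tau k j y| ≤ 4 * 2^k * |x - y| := by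
  have hE : (0:ℝ) < ((2:ℝ)^k)⁻¹ := by positivity
  have h := trap_lip (c := (j:ℝ) * (((2:ℝ)^k)⁻¹/16) - ((2:ℝ)^k)⁻¹) hE x y
  have heq : |x - y|/(((2:ℝ)^k)⁻¹/4) = 4 * 2^k * |x - y| := by
    have h2 : ((2:ℝ)^k) ≠ 0 := by positivity
    field_simp
  rw [heq] at h
  exact h


set_option maxHeartbeats 1000000 in
theorem stmt5 (α : ℝ) (hα : 1 ≤ α) (φ ψ : ℝ → ℝ)
    (hφnn : ∀ t ∈ Icc (0:ℝ) 1, 0 ≤ φ t) (hψnn : ∀ t ∈ Icc (0:ℝ) 1, 0 ≤ ψ t)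
    (hφei : EssIncOn φ (Icc 0 1))
    (hδ : ∃ δ > (0:ℝ), ∀ n : ℕ, δ * φ ((1/2:ℝ)^n) ≤ φ ((1/2:ℝ)^(n+1)))
    (hfc : ContinuousOn (fun t => t ^ α * φ t) (Icc 0 1))
    (hgc : ContinuousOn (fun t => t ^ α * ψ t) (Icc 0 1))
    (hfei : EssIncOn (fun t => t ^ α * φ t) (Icc 0 1))
    (hgei : EssIncOn (fun t => t ^ α * ψ t) (Icc 0 1))
    (hEf : Equivalence (EF (fun t => t ^ α * φ t)))
    (hEg : Equivalence (EF (fun t => t ^ α * ψ t)))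
    (μ : ℕ → ℝ) (hμnn : ∀ n, 0 ≤ μ n) (hμle : ∀ n, μ n ≤ 2 ^ n)
    (L : ℝ) (hL : 1 ≤ L)
    (hsum : ∀ n : ℕ,
      Summable (fun i : ℕ => (μ (n+i) ^ α / (2:ℝ) ^ ((i:ℝ) * α)) * ψ (μ (n+i) / 2 ^ (n+i))) ∧
      (∑' i : ℕ, (μ (n+i) ^ α / (2:ℝ) ^ ((i:ℝ) * α)) * ψ (μ (n+i) / 2 ^ (n+i))) ≤
        L * ∑ i ∈ Finset.range (n+1), μ i ^ α * ψ (μ i / 2 ^ n))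
    (hmax : ∀ n : ℕ, 1 ≤ n → ∃ i < n, μ n ≤ L * μ i)
    (happrox : SeqEquiv (fun n => φ ((1/2:ℝ)^n))
      (fun n => ∑ i ∈ Finset.range (n+1), μ i ^ α * ψ (μ i / 2 ^ n))) :
    BorelReducible (EF (fun t => t ^ α * φ t)) (EF (fun t => t ^ α * ψ t)) := by
  classical
  obtain ⟨Ca, hCa1, hCa⟩ := happrox
  obtain ⟨d0, hd0, hdstep⟩ := hδ
  set f : ℝ → ℝ := fun t => t ^ α * φ t with hfdef
  set g : ℝ → ℝ := fun t => t ^ α * ψ t with hgdef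
  obtain ⟨Cg, hCg1, hCg⟩ := hgei
  obtain ⟨Cf, hCf1, hCf⟩ := hfei
  have hα0 : (0:ℝ) < α := lt_of_lt_of_le one_pos hα
  have hαne : α ≠ 0 := ne_of_gt hα0
  have h2pow : ∀ m : ℕ, (0:ℝ) < 2^m := fun m => by positivity
  have ghalf : ∀ m : ℕ, ((1:ℝ)/2)^m = ((2:ℝ)^m)⁻¹ := fun m => by rw [one_div, inv_pow]
  have hg0 : g 0 = 0 := by rw [hgdef]; simp [Real.zero_rpow hαne]
  have hf0 : f 0 = 0 := by rw [hfdef]; simp [Real.zero_rpow hαne]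
  have hgnn : ∀ u, u ∈ Icc (0:ℝ) 1 → 0 ≤ g u := fun u hu =>
    mul_nonneg (Real.rpow_nonneg hu.1 α) (hψnn u hu)
  have hfnn : ∀ u, u ∈ Icc (0:ℝ) 1 → 0 ≤ f u := fun u hu =>
    mul_nonneg (Real.rpow_nonneg hu.1 α) (hφnn u hu)
  have hCg0 : (0:ℝ) ≤ Cg := le_trans zero_le_one hCg1
  have hCf0 : (0:ℝ) ≤ Cf := le_trans zero_le_one hCf1
  have hCa0 : (0:ℝ) < Ca := lt_of_lt_of_le one_pos hCa1
  have hL0 : (0:ℝ) ≤ L := le_trans zero_le_one hL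
  have hmem1 : ∀ i n : ℕ, i ≤ n → μ i / 2^n ∈ Icc (0:ℝ) 1 := by
    intro i n hin
    constructor
    · exact div_nonneg (hμnn i) (h2pow n).le
    · rw [div_le_one (h2pow n)]
      exact le_trans (hμle i) (pow_le_pow_right₀ one_le_two hin)
  have hhalfmem : ∀ m : ℕ, ((1:ℝ)/2)^m ∈ Icc (0:ℝ) 1 :=
    fun m => ⟨by positivity, pow_le_one₀ (by norm_num) (by norm_num)⟩
  set P : ℕ → ℝ := fun n => ∑ i ∈ Finset.range (n+1), g (μ i / 2^n) with hPdef
  have hPnn : ∀ n, 0 ≤ P n := by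
    intro n
    apply Finset.sum_nonneg
    intro i hi
    exact hgnn _ (hmem1 i n (by simp only [Finset.mem_range] at hi; omega))
  have hΦP : ∀ n : ℕ, (∑ i ∈ Finset.range (n+1), μ i ^ α * ψ (μ i / 2 ^ n))
      = ((2:ℝ)^n)^α * P n := by
    intro n
    rw [hPdef]
    simp only []
    rw [Finset.mul_sum]
    apply Finset.sum_congr rfl
    intro i hi
    rw [hgdef]
    simp only []
    rw [Real.div_rpow (hμnn i) (h2pow n).le α]
    have hne : ((2:ℝ)^n)^α ≠ 0 := ne_of_gt (Real.rpow_pos_of_pos (h2pow n) α)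
    field_simp
  set r : ℕ → ℝ := fun j => g (μ j / 2^j) with hrdef
  have hrnn : ∀ j, 0 ≤ r j := fun j => hgnn _ (hmem1 j j le_rfl)
  have htrans : ∀ n i : ℕ, (μ (n+i) ^ α / (2:ℝ) ^ ((i:ℝ) * α)) * ψ (μ (n+i) / 2 ^ (n+i))
      = ((2:ℝ)^n)^α * r (n+i) := by
    intro n i
    rw [hrdef]
    simp only []
    rw [hgdef]
    simp only []
    rw [Real.div_rpow (hμnn _) (h2pow _).le α]
    have hsplit : ((2:ℝ)^(n+i))^α = ((2:ℝ)^n)^α * ((2:ℝ)^i)^α := by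
      rw [pow_add, Real.mul_rpow (h2pow n).le (h2pow i).le]
    have hpow2 : ((2:ℝ)^i)^α = (2:ℝ) ^ ((i:ℝ) * α) := by
      rw [← Real.rpow_natCast 2 i, ← Real.rpow_mul (by norm_num : (0:ℝ) ≤ 2)]
    rw [hsplit, hpow2]
    have hne1 : ((2:ℝ)^n)^α ≠ 0 := ne_of_gt (Real.rpow_pos_of_pos (h2pow n) α)
    have hne2 : (2:ℝ) ^ ((i:ℝ)*α) ≠ 0 := ne_of_gt (Real.rpow_pos_of_pos two_pos _)
    field_simp
  have hrsum : Summable r := by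
    have h0 := (hsum 0).1
    have heq : (fun i : ℕ => (μ (0+i) ^ α / (2:ℝ) ^ ((i:ℝ) * α)) * ψ (μ (0+i) / 2 ^ (0+i)))
        = fun i => r i := by
      funext i
      rw [htrans 0 i]
      simp [Real.rpow_natCast]
    rwa [heq] at h0
  have hshift : ∀ n, Summable (fun i => r (n+i)) := by
    intro n
    have heq : (fun i => r (n+i)) = fun i => r (i+n) := funext fun i => by rw [add_comm]
    rw [heq]
    exact (summable_nat_add_iff n).2 hrsum
  have hR : ∀ n, (∑' i, r (n+i)) ≤ L * P n := by
    intro n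
    have h2 := (hsum n).2
    have heq : (fun i : ℕ => (μ (n+i) ^ α / (2:ℝ) ^ ((i:ℝ) * α)) * ψ (μ (n+i) / 2 ^ (n+i)))
        = fun i => ((2:ℝ)^n)^α * r (n+i) := funext (htrans n)
    rw [heq, tsum_mul_left, hΦP n] at h2
    have hpos : (0:ℝ) < ((2:ℝ)^n)^α := Real.rpow_pos_of_pos (h2pow n) α
    have h3 : ((2:ℝ)^n)^α * (∑' i, r (n+i)) ≤ ((2:ℝ)^n)^α * (L * P n) := by
      calc ((2:ℝ)^n)^α * (∑' i, r (n+i)) ≤ L * (((2:ℝ)^n)^α * P n) := h2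
      _ = ((2:ℝ)^n)^α * (L * P n) := by ring
    exact (mul_le_mul_iff_right₀ hpos).mp h3
  have hterm : ∀ n j : ℕ, n ≤ j → r j ≤ L * P n := by
    intro n j hnj
    have hj : j = n + (j - n) := by omega
    calc r j = r (n + (j-n)) := by rw [← hj]
    _ ≤ ∑' i, r (n+i) := Summable.le_tsum (hshift n) (j-n) (fun m _ => hrnn _)
    _ ≤ L * P n := hR n
  have hD1 : ∀ n, P (n+1) ≤ (Cg + L) * P n := by
    intro n
    have e1 : P (n+1) = (∑ i ∈ Finset.range (n+1), g (μ i / 2^(n+1))) + g (μ (n+1)/2^(n+1)) := by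
      rw [hPdef]
      exact Finset.sum_range_succ _ _
    have e2 : ∀ i ∈ Finset.range (n+1), g (μ i / 2^(n+1)) ≤ Cg * g (μ i / 2^n) := by
      intro i hi
      have hin : i ≤ n := by simp only [Finset.mem_range] at hi; omega
      apply hCg _ (hmem1 i (n+1) (by omega)) _ (hmem1 i n hin)
      apply div_le_div_of_nonneg_left (hμnn i) (h2pow n) -- may need different form
      exact pow_le_pow_right₀ one_le_two (by omega)
    calc P (n+1) = (∑ i ∈ Finset.range (n+1), g (μ i / 2^(n+1))) + g (μ (n+1)/2^(n+1)) := e1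
    _ ≤ (∑ i ∈ Finset.range (n+1), Cg * g (μ i / 2^n)) + L * P n :=
        add_le_add (Finset.sum_le_sum e2) (hterm n (n+1) (by omega))
    _ = Cg * P n + L * P n := by rw [← Finset.mul_sum, hPdef]
    _ = (Cg + L) * P n := by ring
  have hCaB : ∀ n : ℕ, (∑ i ∈ Finset.range (n+1), μ i ^ α * ψ (μ i / 2 ^ n)) / Ca ≤ φ ((1/2:ℝ)^n)
      ∧ φ ((1/2:ℝ)^n) ≤ Ca * ∑ i ∈ Finset.range (n+1), μ i ^ α * ψ (μ i / 2 ^ n) := hCa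
  have hup : ∀ n : ℕ, φ ((1/2:ℝ)^n) ≤ Ca * (((2:ℝ)^n)^α * P n) := by
    intro n
    have h := (hCaB n).2
    rwa [hΦP n] at h
  have hlowP : ∀ n : ℕ, ((2:ℝ)^n)^α * P n ≤ Ca * φ ((1/2:ℝ)^n) := by
    intro n
    have h := (hCaB n).1
    rw [hΦP n] at h
    have := (div_le_iff₀ hCa0).mp h
    calc ((2:ℝ)^n)^α * P n ≤ φ ((1/2:ℝ)^n) * Ca := this
    _ = Ca * φ ((1/2:ℝ)^n) := by ring
    -- coordinate layer
  set coord : ℕ → ℕ → ℝ → ℝ := fun k j x => μ k * (((2:ℝ)^k)⁻¹ * tau k j x) with hcoorddef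
  have hmulbound : ∀ (k : ℕ) (u : ℝ), 0 ≤ u → u ≤ 1 → μ k * (((2:ℝ)^k)⁻¹ * u) ≤ 1 := by
    intro k u h0 h1
    have h2 : μ k * (((2:ℝ)^k)⁻¹ * u) ≤ 2^k * (((2:ℝ)^k)⁻¹ * u) :=
      mul_le_mul_of_nonneg_right (hμle k) (mul_nonneg (inv_nonneg.mpr (h2pow k).le) h0)
    have h3 : (2:ℝ)^k * (((2:ℝ)^k)⁻¹ * u) = u := by
      rw [← mul_assoc, mul_inv_cancel₀ (ne_of_gt (h2pow k)), one_mul]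
    linarith
  have hcoordmem : ∀ (k j : ℕ) (x : ℝ), coord k j x ∈ Icc (0:ℝ) 1 := by
    intro k j x
    rw [hcoorddef]
    refine ⟨mul_nonneg (hμnn k) (mul_nonneg (inv_nonneg.mpr (h2pow k).le) (tau_nonneg k j x)), ?_⟩
    exact hmulbound k _ (tau_nonneg k j x) (tau_le_one k j x)
  have hcd_eq : ∀ (k j : ℕ) (s t : ℝ), |coord k j s - coord k j t|
      = μ k * (((2:ℝ)^k)⁻¹ * |tau k j s - tau k j t|) := by
    intro k j s t
    rw [hcoorddef]
    simp only []
    rw [← mul_sub, ← mul_sub, abs_mul, abs_mul, abs_of_nonneg (hμnn k),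
      abs_of_nonneg (inv_nonneg.mpr (h2pow k).le)]
  have hcd_le_one : ∀ (k j : ℕ) (s t : ℝ), |coord k j s - coord k j t| ≤ 1 := by
    intro k j s t
    rw [hcd_eq]
    exact hmulbound k _ (abs_nonneg _) (tau_abs_le_one k j s t)
  have hcd_lip : ∀ (k j : ℕ) (s t : ℝ), |coord k j s - coord k j t| ≤ 4 * μ k * |s - t| := by
    intro k j s t
    rw [hcd_eq]
    have h1 := tau_lip k j s t
    calc μ k * (((2:ℝ)^k)⁻¹ * |tau k j s - tau k j t|)
        ≤ μ k * (((2:ℝ)^k)⁻¹ * (4 * 2^k * |s - t|)) :=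
          mul_le_mul_of_nonneg_left
            (mul_le_mul_of_nonneg_left h1 (inv_nonneg.mpr (h2pow k).le)) (hμnn k)
      _ = 4 * μ k * |s - t| := by
          have h2 : ((2:ℝ)^k) ≠ 0 := by positivity
          field_simp
  have habsmem : ∀ a b : ℝ, a ∈ Icc (0:ℝ) 1 → b ∈ Icc (0:ℝ) 1 → |a - b| ∈ Icc (0:ℝ) 1 := by
    intro a b ha hb
    exact ⟨abs_nonneg _, abs_sub_le_iff.mpr ⟨by linarith [ha.1, ha.2, hb.1, hb.2],
      by linarith [ha.1, ha.2, hb.1, hb.2]⟩⟩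
  -- doubling constants
  have hfval : ∀ q : ℕ, f ((1/2:ℝ)^q) = φ ((1/2:ℝ)^q) * (((2:ℝ)^q)^α)⁻¹ := by
    intro q
    rw [hfdef]
    simp only []
    have h1 : ((1/2:ℝ)^q) ^ α = (((2:ℝ)^q)^α)⁻¹ := by
      rw [ghalf q, Real.inv_rpow (h2pow q).le]
    rw [h1]
    ring
  have hsucc : ∀ q : ℕ, ((2:ℝ)^(q+1))^α = (2:ℝ)^α * ((2:ℝ)^q)^α := by
    intro q
    rw [pow_succ, mul_comm ((2:ℝ)^q) 2, Real.mul_rpow (by norm_num : (0:ℝ) ≤ 2) (h2pow q).le]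
  set Kup : ℝ := (2:ℝ)^α * Ca^2 / d0 with hKupdef
  have hKup0 : 0 ≤ Kup := by
    rw [hKupdef]
    apply div_nonneg _ hd0.le
    positivity
  have hD2 : ∀ n, P n ≤ Kup * P (n+1) := by
    intro n
    have h1 := hlowP n
    have h2 := hdstep n
    have h3 := hup (n+1)
    rw [hsucc n] at h3
    have hpos : (0:ℝ) < ((2:ℝ)^n)^α := Real.rpow_pos_of_pos (h2pow n) α
    have hkey : d0 * (((2:ℝ)^n)^α * P n) ≤ Ca^2 * ((2:ℝ)^α * (((2:ℝ)^n)^α * P (n+1))) := by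
      calc d0 * (((2:ℝ)^n)^α * P n) ≤ d0 * (Ca * φ ((1/2:ℝ)^n)) :=
            mul_le_mul_of_nonneg_left h1 hd0.le
        _ = Ca * (d0 * φ ((1/2:ℝ)^n)) := by ring
        _ ≤ Ca * φ ((1/2:ℝ)^(n+1)) := mul_le_mul_of_nonneg_left h2 hCa0.le
        _ ≤ Ca * (Ca * ((2:ℝ)^α * ((2:ℝ)^n)^α * P (n+1))) := mul_le_mul_of_nonneg_left h3 hCa0.le
        _ = Ca^2 * ((2:ℝ)^α * (((2:ℝ)^n)^α * P (n+1))) := by ring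
    have hkey2 : ((2:ℝ)^n)^α * (d0 * P n) ≤ ((2:ℝ)^n)^α * (Ca^2 * ((2:ℝ)^α * P (n+1))) := by
      have e1 : ((2:ℝ)^n)^α * (d0 * P n) = d0 * (((2:ℝ)^n)^α * P n) := by ring
      have e2 : ((2:ℝ)^n)^α * (Ca^2 * ((2:ℝ)^α * P (n+1)))
          = Ca^2 * ((2:ℝ)^α * (((2:ℝ)^n)^α * P (n+1))) := by ring
      rw [e1, e2]
      exact hkey
    have hkey3 := (mul_le_mul_iff_right₀ hpos).mp hkey2
    rw [hKupdef, div_mul_eq_mul_div, le_div_iff₀ hd0]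
    calc P n * d0 = d0 * P n := by ring
      _ ≤ Ca^2 * ((2:ℝ)^α * P (n+1)) := hkey3
      _ = (2:ℝ)^α * Ca^2 * P (n+1) := by ring
  set KK : ℝ := (1 + Kup)^2 + (Cg + L) with hKKdef
  have hKK1 : 1 ≤ KK := by
    rw [hKKdef]
    nlinarith [hKup0, hCg0, hL0, hCg1]
  have hKKup : Kup ≤ KK := by
    rw [hKKdef]
    nlinarith [hKup0, hCg0, hL0]
  have hKKup2 : Kup^2 ≤ KK := by
    rw [hKKdef]
    nlinarith [hKup0, hCg0, hL0]
  have hKKCgL : Cg + L ≤ KK := by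
    rw [hKKdef]
    nlinarith [hKup0]
  set AA : ℝ := Cf * (Ca * Cg) with hAAdef
  set BB : ℝ := 34 * Cg * ((1+L) * (KK * (Ca * ((2:ℝ)^α / d0 * Cf)))) with hBBdef
  have main : ∀ s t : ℝ, s ∈ Icc (0:ℝ) 1 → t ∈ Icc (0:ℝ) 1 → s ≤ t →
      Summable (fun p : ℕ × ℕ => g |coord p.1 p.2 s - coord p.1 p.2 t|) ∧
      f (t - s) ≤ AA * (∑' p : ℕ × ℕ, g |coord p.1 p.2 s - coord p.1 p.2 t|) ∧
      (∑' p : ℕ × ℕ, g |coord p.1 p.2 s - coord p.1 p.2 t|) ≤ BB * f (t - s) := by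
    intro s t hs ht hst
    rcases eq_or_lt_of_le hst with heq | hlt
    · subst heq
      have hzero : (fun p : ℕ × ℕ => g |coord p.1 p.2 s - coord p.1 p.2 s|) = fun _ => 0 := by
        funext p
        rw [sub_self, abs_zero, hg0]
      refine ⟨?_, ?_, ?_⟩ <;> rw [hzero]
      · exact summable_zero
      · rw [tsum_zero, sub_self, hf0, mul_zero]
      · rw [tsum_zero, sub_self, hf0, mul_zero]
    · have hd0' : 0 < t - s := sub_pos.mpr hlt
      have hd1 : t - s ≤ 1 := by linarith [hs.1, ht.2]
      obtain ⟨n, hn1, hn2⟩ := find_scale hd0' hd1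
      obtain ⟨m, hmdef⟩ : ∃ m : ℕ, m = n - 2 := ⟨n - 2, rfl⟩
      -- caps
      have hcap : ∀ k j, |coord k j s - coord k j t| ≤ μ k / 2^(max k m) := by
        intro k j
        rcases le_or_gt m k with hk | hk
        · rw [max_eq_left hk, div_eq_mul_inv, hcd_eq]
          apply mul_le_mul_of_nonneg_left _ (hμnn k)
          calc ((2:ℝ)^k)⁻¹ * |tau k j s - tau k j t| ≤ ((2:ℝ)^k)⁻¹ * 1 :=
              mul_le_mul_of_nonneg_left (tau_abs_le_one k j s t) (inv_nonneg.mpr (h2pow k).le)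
            _ = ((2:ℝ)^k)⁻¹ := mul_one _
        · rw [max_eq_right hk.le]
          have hn3 : n = m + 2 := by omega
          calc |coord k j s - coord k j t| ≤ 4 * μ k * |s - t| := hcd_lip k j s t
            _ = 4 * μ k * (t - s) := by
                rw [abs_sub_comm, abs_of_nonneg (by linarith : (0:ℝ) ≤ t - s)]
            _ ≤ 4 * μ k * ((2:ℝ)^n)⁻¹ :=
                mul_le_mul_of_nonneg_left hn2 (mul_nonneg (by norm_num) (hμnn k))
            _ = μ k / 2^m := by
                rw [hn3, pow_add]
                have h2 : ((2:ℝ)^m) ≠ 0 := by positivity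
                field_simp
                ring
      have hbmem : ∀ k, μ k / 2^(max k m) ∈ Icc (0:ℝ) 1 := fun k => hmem1 k (max k m) (le_max_left _ _)
      set W : ℕ → Finset ℕ := fun k => Finset.Icc ⌊s*(16*2^k)⌋₊ (⌊s*(16*2^k)⌋₊+16)
        ∪ Finset.Icc ⌊t*(16*2^k)⌋₊ (⌊t*(16*2^k)⌋₊+16) with hWdef
      have hoff : ∀ k : ℕ, ∀ j ∉ W k, g |coord k j s - coord k j t| = 0 := by
        intro k j hj
        rw [hWdef] at hj
        simp only [Finset.mem_union] at hj
        push_neg at hj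
        have h1 : tau k j s = 0 := tau_eq_zero_of_not_mem_window hs.1 hj.1
        have h2 : tau k j t = 0 := tau_eq_zero_of_not_mem_window ht.1 hj.2
        rw [hcd_eq, h1, h2, sub_self, abs_zero, mul_zero, mul_zero, hg0]
      have hslice_sum : ∀ k, Summable (fun j => g |coord k j s - coord k j t|) :=
        fun k => summable_of_ne_finset_zero (hoff k)
      have hgabs_nn : ∀ k j, 0 ≤ g |coord k j s - coord k j t| :=
        fun k j => hgnn _ (habsmem _ _ (hcoordmem k j s) (hcoordmem k j t))
      have hslice_bound : ∀ k, (∑' j, g |coord k j s - coord k j t|)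
          ≤ 34 * Cg * g (μ k / 2^(max k m)) := by
        intro k
        rw [tsum_eq_sum (hoff k)]
        have hcardN : (W k).card ≤ 34 := by
          have h := Finset.card_union_le (Finset.Icc ⌊s*(16*2^k)⌋₊ (⌊s*(16*2^k)⌋₊+16))
            (Finset.Icc ⌊t*(16*2^k)⌋₊ (⌊t*(16*2^k)⌋₊+16))
          rw [Nat.card_Icc, Nat.card_Icc] at h
          rw [hWdef]
          exact le_trans h (by omega)
        have hcard : ((W k).card : ℝ) ≤ 34 := by exact_mod_cast hcardN
        have hterm' : ∀ j ∈ W k, g |coord k j s - coord k j t| ≤ Cg * g (μ k / 2^(max k m)) := by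
          intro j _
          exact hCg _ ⟨abs_nonneg _, hcd_le_one k j s t⟩ _ (hbmem k) (hcap k j)
        calc (∑ j ∈ W k, g |coord k j s - coord k j t|)
            ≤ (W k).card • (Cg * g (μ k / 2^(max k m))) := Finset.sum_le_card_nsmul _ _ _ hterm'
          _ = ((W k).card : ℝ) * (Cg * g (μ k / 2^(max k m))) := nsmul_eq_mul _ _
          _ ≤ 34 * (Cg * g (μ k / 2^(max k m))) :=
              mul_le_mul_of_nonneg_right hcard (mul_nonneg hCg0 (hgnn _ (hbmem k)))
          _ = 34 * Cg * g (μ k / 2^(max k m)) := by ring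
      have hgb : ∀ k : ℕ, g (μ (k+(m+1)) / 2^(max (k+(m+1)) m)) = r (k+(m+1)) := by
        intro k
        rw [max_eq_left (by omega), hrdef]
      have hgbsum : Summable (fun k => g (μ k / 2^(max k m))) := by
        apply (summable_nat_add_iff (m+1)).1
        exact Summable.congr ((summable_nat_add_iff (m+1)).2 hrsum) (fun k => (hgb k).symm)
      have hboundsum : Summable (fun k => 34 * Cg * g (μ k / 2^(max k m))) := hgbsum.mul_left _
      have hsums_sum : Summable (fun k => ∑' j, g |coord k j s - coord k j t|) :=
        Summable.of_nonneg_of_le (fun k => tsum_nonneg (fun j => hgabs_nn k j))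
          hslice_bound hboundsum
      have hFsum : Summable (fun p : ℕ × ℕ => g |coord p.1 p.2 s - coord p.1 p.2 t|) := by
        rw [summable_prod_of_nonneg (fun p => hgabs_nn p.1 p.2)]
        exact ⟨hslice_sum, hsums_sum⟩
      have hTprod : (∑' p : ℕ × ℕ, g |coord p.1 p.2 s - coord p.1 p.2 t|)
          = ∑' k, ∑' j, g |coord k j s - coord k j t| := Summable.tsum_prod' hFsum hslice_sum
      have hsplitsum : (∑' k, g (μ k / 2^(max k m))) ≤ P m + L * P (m+1) := by
        have hsplit := Summable.sum_add_tsum_nat_add (f := fun k => g (μ k / 2^(max k m))) (m+1) hgbsum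
        have he1 : (∑ i ∈ Finset.range (m+1), g (μ i / 2^(max i m))) = P m := by
          rw [hPdef]
          apply Finset.sum_congr rfl
          intro i hi
          simp only [Finset.mem_range] at hi
          rw [max_eq_right (by omega)]
        have he2 : (∑' i : ℕ, g (μ (i+(m+1)) / 2^(max (i+(m+1)) m))) ≤ L * P (m+1) := by
          have heq : (fun i : ℕ => g (μ (i+(m+1)) / 2^(max (i+(m+1)) m)))
              = fun i => r ((m+1)+i) := by
            funext i
            rw [hgb i, add_comm]
          rw [heq]
          exact hR (m+1)
        rw [← hsplit, he1]
        linarith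
      have hKm : P m ≤ KK * P n ∧ P (m+1) ≤ KK * P n := by
        rcases le_or_gt n 1 with hn01 | hn2'
        · have hm0 : m = 0 := by omega
          rcases Nat.le_one_iff_eq_zero_or_eq_one.mp hn01 with h0 | h1
          · subst h0
            rw [hm0]
            constructor
            · nlinarith [hPnn 0, hKK1]
            · calc P 1 ≤ (Cg + L) * P 0 := hD1 0
                _ ≤ KK * P 0 := mul_le_mul_of_nonneg_right hKKCgL (hPnn 0)
          · subst h1
            rw [hm0]
            constructor
            · calc P 0 ≤ Kup * P 1 := hD2 0
                _ ≤ KK * P 1 := mul_le_mul_of_nonneg_right hKKup (hPnn 1)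
            · nlinarith [hPnn 1, hKK1]
        · have hn3 : n = m + 2 := by omega
          subst hn3
          constructor
          · calc P m ≤ Kup * P (m+1) := hD2 m
              _ ≤ Kup * (Kup * P (m+2)) :=
                  mul_le_mul_of_nonneg_left (hD2 (m+1)) hKup0
              _ = Kup^2 * P (m+2) := by ring
              _ ≤ KK * P (m+2) := mul_le_mul_of_nonneg_right hKKup2 (hPnn (m+2))
          · calc P (m+1) ≤ Kup * P (m+2) := hD2 (m+1)
              _ ≤ KK * P (m+2) := mul_le_mul_of_nonneg_right hKKup (hPnn (m+2))
      -- conversion between P n and f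
      have hXpos : (0:ℝ) < ((2:ℝ)^n)^α := Real.rpow_pos_of_pos (h2pow n) α
      have hfhalf_nn : ∀ q : ℕ, 0 ≤ f ((1/2:ℝ)^q) := fun q => hfnn _ (hhalfmem q)
      have hPf : P n ≤ Ca * f ((1/2:ℝ)^n) := by
        have h := hlowP n
        calc P n = (((2:ℝ)^n)^α * P n) * (((2:ℝ)^n)^α)⁻¹ := by
              field_simp
          _ ≤ (Ca * φ ((1/2:ℝ)^n)) * (((2:ℝ)^n)^α)⁻¹ :=
              mul_le_mul_of_nonneg_right h (inv_nonneg.mpr hXpos.le)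
          _ = Ca * f ((1/2:ℝ)^n) := by rw [hfval n]; ring
      have hfd : f ((1/2:ℝ)^n) ≤ (2:ℝ)^α / d0 * f ((1/2:ℝ)^(n+1)) := by
        have key : φ ((1/2:ℝ)^n) ≤ φ ((1/2:ℝ)^(n+1)) / d0 :=
          (le_div_iff₀ hd0).mpr (by linarith [hdstep n])
        rw [hfval n, hfval (n+1), hsucc n]
        calc φ ((1/2:ℝ)^n) * (((2:ℝ)^n)^α)⁻¹
            ≤ (φ ((1/2:ℝ)^(n+1)) / d0) * (((2:ℝ)^n)^α)⁻¹ :=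
              mul_le_mul_of_nonneg_right key (inv_nonneg.mpr hXpos.le)
          _ = (2:ℝ)^α / d0 * (φ ((1/2:ℝ)^(n+1)) * ((2:ℝ)^α * ((2:ℝ)^n)^α)⁻¹) := by
              have h2α : (0:ℝ) < (2:ℝ)^α := Real.rpow_pos_of_pos two_pos α
              field_simp
      have hfc' : f ((1/2:ℝ)^(n+1)) ≤ Cf * f (t - s) := by
        apply hCf _ (hhalfmem (n+1)) _ ⟨by linarith, hd1⟩
        rw [ghalf (n+1)]
        exact hn1
      have hPn_fts : P n ≤ Ca * ((2:ℝ)^α / d0 * Cf) * f (t - s) := by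
        have h2α0 : (0:ℝ) ≤ (2:ℝ)^α / d0 := div_nonneg (Real.rpow_nonneg (by norm_num) α) hd0.le
        calc P n ≤ Ca * f ((1/2:ℝ)^n) := hPf
          _ ≤ Ca * ((2:ℝ)^α / d0 * f ((1/2:ℝ)^(n+1))) :=
              mul_le_mul_of_nonneg_left hfd hCa0.le
          _ ≤ Ca * ((2:ℝ)^α / d0 * (Cf * f (t - s))) :=
              mul_le_mul_of_nonneg_left (mul_le_mul_of_nonneg_left hfc' h2α0) hCa0.le
          _ = Ca * ((2:ℝ)^α / d0 * Cf) * f (t - s) := by ring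
      -- upper bound
      have hTub : (∑' p : ℕ × ℕ, g |coord p.1 p.2 s - coord p.1 p.2 t|) ≤ BB * f (t - s) := by
        have step1 : (∑' p : ℕ × ℕ, g |coord p.1 p.2 s - coord p.1 p.2 t|)
            ≤ ∑' k, 34 * Cg * g (μ k / 2^(max k m)) := by
          rw [hTprod]
          exact Summable.tsum_le_tsum hslice_bound hsums_sum hboundsum
        have step2 : (∑' k, 34 * Cg * g (μ k / 2^(max k m)))
            = 34 * Cg * ∑' k, g (μ k / 2^(max k m)) := tsum_mul_left
        have h34 : (0:ℝ) ≤ 34 * Cg := by positivity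
        have step3 : 34 * Cg * (∑' k, g (μ k / 2^(max k m))) ≤ 34 * Cg * (P m + L * P (m+1)) :=
          mul_le_mul_of_nonneg_left hsplitsum h34
        have step4 : P m + L * P (m+1) ≤ (1+L) * (KK * P n) := by
          have h4a := mul_le_mul_of_nonneg_left hKm.2 hL0
          have h4b := hKm.1
          nlinarith [h4a, h4b]
        have step5 : (1+L) * (KK * P n) ≤ (1+L) * (KK * (Ca * ((2:ℝ)^α / d0 * Cf) * f (t - s))) := by
          apply mul_le_mul_of_nonneg_left _ (by linarith)
          exact mul_le_mul_of_nonneg_left hPn_fts (by linarith [hKK1])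
        calc (∑' p : ℕ × ℕ, g |coord p.1 p.2 s - coord p.1 p.2 t|)
            ≤ 34 * Cg * (P m + L * P (m+1)) := by
              rw [← step2] at step3
              exact le_trans step1 step3
          _ ≤ 34 * Cg * ((1+L) * (KK * P n)) := mul_le_mul_of_nonneg_left step4 h34
          _ ≤ 34 * Cg * ((1+L) * (KK * (Ca * ((2:ℝ)^α / d0 * Cf) * f (t - s)))) :=
              mul_le_mul_of_nonneg_left step5 h34
          _ = BB * f (t - s) := by rw [hBBdef]; ring
      -- lower bound
      have hpick : ∀ k, k ≤ n → g (μ k / 2^n) ≤ Cg * (∑' j, g |coord k j s - coord k j t|) := by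
        intro k hk
        obtain ⟨j, hj⟩ := exists_big hk hs.1 hst hn1 hn2
        have harg : μ k / 2^n ≤ |coord k j s - coord k j t| := by
          rw [hcd_eq, div_eq_mul_inv]
          have h2' : ((2:ℝ)^n)⁻¹ ≤ ((2:ℝ)^k)⁻¹ * |tau k j s - tau k j t| := by
            rw [abs_sub_comm]
            exact hj
          exact mul_le_mul_of_nonneg_left h2' (hμnn k)
        have h1g : g (μ k / 2^n) ≤ Cg * g |coord k j s - coord k j t| :=
          hCg _ (hmem1 k n hk) _ ⟨abs_nonneg _, hcd_le_one k j s t⟩ harg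
        have h2g : g |coord k j s - coord k j t| ≤ ∑' j', g |coord k j' s - coord k j' t| :=
          Summable.le_tsum (hslice_sum k) j (fun j' _ => hgabs_nn k j')
        calc g (μ k / 2^n) ≤ Cg * g |coord k j s - coord k j t| := h1g
          _ ≤ Cg * ∑' j', g |coord k j' s - coord k j' t| :=
            mul_le_mul_of_nonneg_left h2g hCg0
      have hPle : P n ≤ Cg * (∑' p : ℕ × ℕ, g |coord p.1 p.2 s - coord p.1 p.2 t|) := by
        calc P n ≤ ∑ k ∈ Finset.range (n+1), Cg * (∑' j, g |coord k j s - coord k j t|) := by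
              rw [hPdef]
              exact Finset.sum_le_sum (fun k hk =>
                hpick k (by simp only [Finset.mem_range] at hk; omega))
          _ = Cg * ∑ k ∈ Finset.range (n+1), (∑' j, g |coord k j s - coord k j t|) := by
              rw [Finset.mul_sum]
          _ ≤ Cg * ∑' k, (∑' j, g |coord k j s - coord k j t|) :=
              mul_le_mul_of_nonneg_left
                (Summable.sum_le_tsum _ (fun k _ => tsum_nonneg (fun j => hgabs_nn k j)) hsums_sum) hCg0
          _ = Cg * (∑' p : ℕ × ℕ, g |coord p.1 p.2 s - coord p.1 p.2 t|) := by rw [← hTprod]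
      have hlowT : f (t - s) ≤ AA * (∑' p : ℕ × ℕ, g |coord p.1 p.2 s - coord p.1 p.2 t|) := by
        have h1 : f (t - s) ≤ Cf * f ((1/2:ℝ)^n) := by
          apply hCf _ ⟨by linarith, hd1⟩ _ (hhalfmem n)
          rw [ghalf n]
          exact hn2
        have h2 : f ((1/2:ℝ)^n) ≤ Ca * P n := by
          have h3 := hup n
          rw [hfval n]
          calc φ ((1/2:ℝ)^n) * (((2:ℝ)^n)^α)⁻¹
              ≤ (Ca * (((2:ℝ)^n)^α * P n)) * (((2:ℝ)^n)^α)⁻¹ :=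
                mul_le_mul_of_nonneg_right h3 (inv_nonneg.mpr hXpos.le)
            _ = Ca * P n := by
                field_simp
        calc f (t - s) ≤ Cf * f ((1/2:ℝ)^n) := h1
          _ ≤ Cf * (Ca * P n) := mul_le_mul_of_nonneg_left h2 hCf0
          _ ≤ Cf * (Ca * (Cg * (∑' p : ℕ × ℕ, g |coord p.1 p.2 s - coord p.1 p.2 t|))) := by
              apply mul_le_mul_of_nonneg_left _ hCf0
              exact mul_le_mul_of_nonneg_left hPle hCa0.le
          _ = AA * (∑' p : ℕ × ℕ, g |coord p.1 p.2 s - coord p.1 p.2 t|) := by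
              rw [hAAdef]; ring
      exact ⟨hFsum, hlowT, hTub⟩
  have hAA0 : 0 ≤ AA := by
    rw [hAAdef]
    positivity
  have hBB0 : 0 ≤ BB := by
    rw [hBBdef]
    have : (0:ℝ) ≤ KK := by linarith [hKK1]
    have h2α0 : (0:ℝ) ≤ (2:ℝ)^α / d0 := div_nonneg (Real.rpow_nonneg (by norm_num) α) hd0.le
    positivity
  have mainsym : ∀ s t : ℝ, s ∈ Icc (0:ℝ) 1 → t ∈ Icc (0:ℝ) 1 →
      Summable (fun p : ℕ × ℕ => g |coord p.1 p.2 s - coord p.1 p.2 t|) ∧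
      f |s - t| ≤ AA * (∑' p : ℕ × ℕ, g |coord p.1 p.2 s - coord p.1 p.2 t|) ∧
      (∑' p : ℕ × ℕ, g |coord p.1 p.2 s - coord p.1 p.2 t|) ≤ BB * f |s - t| := by
    intro s t hs ht
    rcases le_total s t with h | h
    · have hm := main s t hs ht h
      rw [abs_sub_comm, abs_of_nonneg (sub_nonneg.mpr h)]
      exact hm
    · have hm := main t s ht hs h
      have hswap : (fun p : ℕ × ℕ => g |coord p.1 p.2 t - coord p.1 p.2 s|)
          = (fun p : ℕ × ℕ => g |coord p.1 p.2 s - coord p.1 p.2 t|) := by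
        funext p
        rw [abs_sub_comm]
      rw [hswap] at hm
      rw [abs_of_nonneg (sub_nonneg.mpr h)]
      exact hm
  set e : ℕ ≃ ℕ × ℕ × ℕ := (Denumerable.eqv (ℕ × ℕ × ℕ)).symm with hedef
  refine ⟨fun x i => ⟨coord (e i).2.1 (e i).2.2 ((x ((e i).1) : ℝ)), hcoordmem _ _ _⟩, ?_, ?_⟩
  · apply measurable_pi_lambda
    intro i
    apply Measurable.subtype_mk
    have hc : Continuous (fun u : ℝ => coord (e i).2.1 (e i).2.2 u) := by
      rw [hcoorddef]
      exact continuous_const.mul (continuous_const.mul (tau_continuous _ _))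
    exact hc.measurable.comp (measurable_subtype_coe.comp (measurable_pi_apply _))
  · intro x y
    have h1 : EF g (fun i => ⟨coord (e i).2.1 (e i).2.2 ((x ((e i).1) : ℝ)), hcoordmem _ _ _⟩)
        (fun i => ⟨coord (e i).2.1 (e i).2.2 ((y ((e i).1) : ℝ)), hcoordmem _ _ _⟩)
        ↔ Summable (fun q : ℕ × ℕ × ℕ =>
            g |coord q.2.1 q.2.2 ((x q.1 : ℝ)) - coord q.2.1 q.2.2 ((y q.1 : ℝ))|) :=
      Equiv.summable_iff (f := fun q : ℕ × ℕ × ℕ =>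
            g |coord q.2.1 q.2.2 ((x q.1 : ℝ)) - coord q.2.1 q.2.2 ((y q.1 : ℝ))|) e
    rw [h1]
    have h2 : Summable (fun q : ℕ × ℕ × ℕ =>
        g |coord q.2.1 q.2.2 ((x q.1 : ℝ)) - coord q.2.1 q.2.2 ((y q.1 : ℝ))|)
        ↔ (∀ n' : ℕ, Summable (fun p : ℕ × ℕ =>
            g |coord p.1 p.2 ((x n' : ℝ)) - coord p.1 p.2 ((y n' : ℝ))|))
          ∧ Summable (fun n' : ℕ => ∑' p : ℕ × ℕ,
            g |coord p.1 p.2 ((x n' : ℝ)) - coord p.1 p.2 ((y n' : ℝ))|) :=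
      summable_prod_of_nonneg (fun q =>
        hgnn _ (habsmem _ _ (hcoordmem _ _ _) (hcoordmem _ _ _)))
    rw [h2]
    constructor
    · intro hxy
      refine ⟨fun n' => (mainsym _ _ (x n').2 (y n').2).1, ?_⟩
      apply Summable.of_nonneg_of_le
        (fun n' => tsum_nonneg (fun p =>
          hgnn _ (habsmem _ _ (hcoordmem _ _ _) (hcoordmem _ _ _))))
        (fun n' => (mainsym _ _ (x n').2 (y n').2).2.2)
      exact hxy.mul_left BB
    · intro hsum2
      apply Summable.of_nonneg_of_le
        (fun n' => hfnn _ (habsmem _ _ (x n').2 (y n').2))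
        (fun n' => (mainsym _ _ (x n').2 (y n').2).2.1)
      exact hsum2.2.mul_left AA
end

section
/- Let μ : ω → ℝ and let ψ : [0,1] → [0,∞) be essentially increasing on [0,1] with ψ(1/2) > 0, and suppose there is λ > 0 such that ψ(1/2^{2n}) ≥ λ·ψ(1/2^n) for every n < ω. Assume there are 0 ≤ ε < 1 and n₀ < ω such that 2^{−εn} ≤ μ(i) ≤ 2^{εn} whenever n₀ ≤ i ≤ n < ω and μ(i) ≠ 0. Then there is K ≥ 1 such that ψ(1/2^n)/K ≤ ψ(μ(i)/2^n) ≤ K·ψ(1/2^n) whenever n₀ ≤ i ≤ n < ω and μ(i) ≠ 0. -/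
open Set

theorem stmt8 (μ : ℕ → ℝ) (ψ : ℝ → ℝ)
    (hψnn : ∀ t ∈ Icc (0:ℝ) 1, 0 ≤ ψ t)
    (hψei : EssIncOn ψ (Icc 0 1)) (hhalf : 0 < ψ (1/2))
    (hlam : ∃ lam > (0:ℝ), ∀ n : ℕ, lam * ψ ((1/2:ℝ)^n) ≤ ψ ((1/2:ℝ)^(2*n)))
    (ε : ℝ) (hε0 : 0 ≤ ε) (hε1 : ε < 1) (n₀ : ℕ)
    (hμ : ∀ i n : ℕ, n₀ ≤ i → i ≤ n → μ i ≠ 0 →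
      (2:ℝ) ^ (-(ε * n)) ≤ μ i ∧ μ i ≤ (2:ℝ) ^ (ε * n)) :
    ∃ K : ℝ, 1 ≤ K ∧ ∀ i n : ℕ, n₀ ≤ i → i ≤ n → μ i ≠ 0 →
      ψ ((1/2:ℝ)^n) / K ≤ ψ (μ i / 2^n) ∧ ψ (μ i / 2^n) ≤ K * ψ ((1/2:ℝ)^n) := by
  obtain ⟨C, hC1, hC⟩ := hψei
  obtain ⟨lam₀, hlam₀, hl₀⟩ := hlam
  set lam : ℝ := min lam₀ 1 with hlamdef
  have hlam0 : 0 < lam := lt_min hlam₀ one_pos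
  have hC0 : (0:ℝ) < C := lt_of_lt_of_le one_pos hC1
  have hmem : ∀ m : ℕ, ((1/2:ℝ))^m ∈ Icc (0:ℝ) 1 := by
    intro m
    exact ⟨by positivity, pow_le_one₀ (by norm_num) (by norm_num)⟩
  have hpowmono : ∀ a b : ℕ, a ≤ b → ((1/2:ℝ))^b ≤ (1/2:ℝ)^a := fun a b hab =>
    pow_le_pow_of_le_one (by norm_num) (by norm_num) hab
  have hpow : ∀ m : ℕ, ((1/2:ℝ))^m = (2:ℝ)^(-(m:ℝ)) := by
    intro m
    rw [Real.rpow_neg (by norm_num), Real.rpow_natCast]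
    rw [one_div, inv_pow]
  have hl : ∀ n : ℕ, lam * ψ ((1/2:ℝ)^n) ≤ ψ ((1/2:ℝ)^(2*n)) := by
    intro n
    calc lam * ψ ((1/2:ℝ)^n) ≤ lam₀ * ψ ((1/2:ℝ)^n) :=
          mul_le_mul_of_nonneg_right (min_le_left _ _) (hψnn _ (hmem n))
      _ ≤ _ := hl₀ n
  have hA : ∀ j m : ℕ, lam^j * ψ ((1/2:ℝ)^m) ≤ ψ ((1/2:ℝ)^(2^j * m)) := by
    intro j
    induction j with
    | zero => intro m; simp
    | succ j ih =>
        intro m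
        have h1 : lam^(j+1) * ψ ((1/2:ℝ)^m) = lam * (lam^j * ψ ((1/2:ℝ)^m)) := by ring
        have h2 : 2*(2^j*m) = 2^(j+1)*m := by ring
        rw [h1]
        calc lam * (lam^j * ψ ((1/2:ℝ)^m)) ≤ lam * ψ ((1/2:ℝ)^(2^j * m)) :=
              mul_le_mul_of_nonneg_left (ih m) hlam0.le
          _ ≤ ψ ((1/2:ℝ)^(2*(2^j*m))) := hl _
          _ = ψ ((1/2:ℝ)^(2^(j+1)*m)) := by rw [h2]
  have h1ε : (0:ℝ) < 1 - ε := by linarith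
  obtain ⟨k, hk⟩ := pow_unbounded_of_one_lt (R := ℝ) (2/(1-ε)) one_lt_two
  have hk2 : 2 < (1-ε) * 2^k := by
    rw [div_lt_iff₀ h1ε] at hk
    nlinarith
  have hlow : ∀ n : ℕ, n ≤ 2^k → lam^k * ψ (1/2) ≤ C * ψ ((1/2:ℝ)^n) := by
    intro n hn
    have h1 := hA k 1
    rw [pow_one, mul_one] at h1
    exact h1.trans (hC _ (hmem _) _ (hmem _) (hpowmono n (2^k) hn))
  obtain ⟨K, hK1, hKa, hKb, hKc⟩ : ∃ K : ℝ, 1 ≤ K ∧ C/lam ≤ K ∧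
      C^2 * ψ 1 / (lam^k * ψ (1/2)) ≤ K ∧ C^2/lam^k ≤ K := by
    refine ⟨max (max (C/lam) (C^2 * ψ 1 / (lam^k * ψ (1/2)))) (max (C^2/lam^k) 1),
      le_max_of_le_right (le_max_right _ _), le_max_of_le_left (le_max_left _ _),
      le_max_of_le_left (le_max_right _ _), le_max_of_le_right (le_max_left _ _)⟩
  have hK0 : (0:ℝ) < K := lt_of_lt_of_le one_pos hK1
  refine ⟨K, hK1, ?_⟩
  intro i n hi hin hμi
  obtain ⟨hμl, hμu⟩ := hμ i n hi hin hμi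
  have h2n : (0:ℝ) < 2^n := by positivity
  have hμpos : 0 < μ i := lt_of_lt_of_le (Real.rpow_pos_of_pos two_pos _) hμl
  have hεn : ε * (n:ℝ) ≤ (n:ℝ) := by nlinarith [Nat.cast_nonneg (α := ℝ) n]
  have hup : μ i ≤ (2:ℝ)^n := by
    refine hμu.trans ?_
    rw [← Real.rpow_natCast 2 n]
    exact Real.rpow_le_rpow_of_exponent_le one_le_two hεn
  have hx1 : μ i / 2^n ≤ 1 := (div_le_one h2n).mpr hup
  have hxmem : μ i / 2^n ∈ Icc (0:ℝ) 1 := ⟨(div_pos hμpos h2n).le, hx1⟩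
  have hψn0 : 0 ≤ ψ ((1/2:ℝ)^n) := hψnn _ (hmem n)
  have hψx0 : 0 ≤ ψ (μ i / 2^n) := hψnn _ hxmem
  constructor
  · -- lower bound
    have hq : ((1/2:ℝ))^(2*n) ≤ μ i / 2^n := by
      have e1 : ((1/2:ℝ))^(2*n) = (1/2:ℝ)^n * (1/2:ℝ)^n := by
        rw [two_mul, pow_add]
      have e2 : ((1/2:ℝ))^n ≤ (2:ℝ)^(-(ε*(n:ℝ))) := by
        rw [hpow n]
        exact Real.rpow_le_rpow_of_exponent_le one_le_two (by linarith)
      have e3 : μ i / 2^n = μ i * (1/2:ℝ)^n := by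
        rw [div_eq_mul_inv, ← inv_pow]
        norm_num
      rw [e1, e3]
      exact mul_le_mul (e2.trans hμl) le_rfl (by positivity) hμpos.le
    have hlb : lam * ψ ((1/2:ℝ)^n) ≤ C * ψ (μ i/2^n) :=
      (hl n).trans (hC _ (hmem _) _ hxmem hq)
    rw [div_le_iff₀ hK0, mul_comm]
    have h5 : ψ ((1/2:ℝ)^n) ≤ C/lam * ψ (μ i / 2^n) := by
      rw [div_mul_eq_mul_div, le_div_iff₀ hlam0]
      nlinarith
    exact h5.trans (mul_le_mul_of_nonneg_right hKa hψx0)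
  · -- upper bound
    by_cases hcase : 2^k ≤ n
    · -- large n
      set m : ℕ := n / 2^k + 1 with hmdef
      have hkpos : 0 < 2^k := Nat.pow_pos (by norm_num)
      have hnm : n ≤ 2^k * m := by
        have h1 : n = 2^k * (n / 2^k) + n % 2^k := (Nat.div_add_mod n (2^k)).symm
        have h2 : n % 2^k < 2^k := Nat.mod_lt n hkpos
        have h3 : 2^k * m = 2^k * (n/2^k) + 2^k := by rw [hmdef]; ring
        omega
      have hkR : (0:ℝ) < (2:ℝ)^k := by positivity
      have hmlen : (m:ℝ) ≤ (1-ε) * n := by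
        have hc1 : ((n / 2^k : ℕ):ℝ) ≤ (n:ℝ) / (2:ℝ)^k := by
          have := Nat.cast_div_le (α := ℝ) (m := n) (n := 2^k)
          push_cast at this ⊢
          exact this
        have hc2 : (1:ℝ) ≤ (n:ℝ) / (2:ℝ)^k := by
          rw [le_div_iff₀ hkR, one_mul]
          exact_mod_cast Nat.cast_le.mpr hcase
        have hm : (m:ℝ) = ((n / 2^k : ℕ):ℝ) + 1 := by rw [hmdef]; push_cast; ring
        have h4 : (m:ℝ) ≤ 2 * ((n:ℝ) / (2:ℝ)^k) := by rw [hm]; linarith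
        have hd : (n:ℝ) / (2:ℝ)^k * (2:ℝ)^k = (n:ℝ) := div_mul_cancel₀ _ hkR.ne'
        have ht0 : (0:ℝ) ≤ (n:ℝ) / (2:ℝ)^k := by linarith
        have h6 : (n:ℝ)/(2:ℝ)^k * ((1-ε) * 2^k) = (1-ε)*(n:ℝ) := by
          rw [show (n:ℝ)/(2:ℝ)^k * ((1-ε)*(2:ℝ)^k)
              = (1-ε)*((n:ℝ)/(2:ℝ)^k*(2:ℝ)^k) from by ring, hd]
        have h5 : 2 * ((n:ℝ) / (2:ℝ)^k) ≤ (1-ε) * n := by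
          have := mul_le_mul_of_nonneg_left hk2.le ht0
          linarith
        linarith
      have hxle : μ i / 2^n ≤ (1/2:ℝ)^m := by
        rw [div_le_iff₀ h2n]
        calc μ i ≤ (2:ℝ)^(ε*(n:ℝ)) := hμu
          _ ≤ (2:ℝ)^((n:ℝ) - (m:ℝ)) :=
              Real.rpow_le_rpow_of_exponent_le one_le_two (by linarith)
          _ = (2:ℝ)^(-(m:ℝ)) * (2:ℝ)^((n:ℝ)) := by
              rw [show (n:ℝ) - (m:ℝ) = -(m:ℝ) + (n:ℝ) from by ring,
                Real.rpow_add two_pos]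
          _ = (1/2:ℝ)^m * 2^n := by rw [hpow m, Real.rpow_natCast]
      have hstep1 : ψ (μ i/2^n) ≤ C * ψ ((1/2:ℝ)^m) := hC _ hxmem _ (hmem m) hxle
      have hstep2 : lam^k * ψ ((1/2:ℝ)^m) ≤ ψ ((1/2:ℝ)^(2^k*m)) := hA k m
      have hstep3 : ψ ((1/2:ℝ)^(2^k*m)) ≤ C * ψ ((1/2:ℝ)^n) :=
        hC _ (hmem _) _ (hmem _) (hpowmono n _ hnm)
      have hlk : (0:ℝ) < lam^k := by positivity
      have h6 : ψ ((1/2:ℝ)^m) ≤ C / lam^k * ψ ((1/2:ℝ)^n) := by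
        rw [div_mul_eq_mul_div, le_div_iff₀ hlk,
          mul_comm (ψ ((1/2:ℝ)^m)) (lam^k)]
        exact hstep2.trans hstep3
      calc ψ (μ i/2^n) ≤ C * (C / lam^k * ψ ((1/2:ℝ)^n)) :=
            hstep1.trans (mul_le_mul_of_nonneg_left h6 hC0.le)
        _ = C^2/lam^k * ψ ((1/2:ℝ)^n) := by ring
        _ ≤ K * ψ ((1/2:ℝ)^n) := mul_le_mul_of_nonneg_right hKc hψn0
    · -- small n
      have hn2k : n ≤ 2^k := (not_le.mp hcase).le
      have h1 : ψ (μ i/2^n) ≤ C * ψ 1 := hC _ hxmem 1 ⟨zero_le_one, le_rfl⟩ hx1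
      have h2 := hlow n hn2k
      have hd : (0:ℝ) < lam^k * ψ (1/2) := by positivity
      have h4 : C^2 * ψ 1 ≤ K * (lam^k * ψ (1/2)) := (div_le_iff₀ hd).mp hKb
      have h4' : C^2 * ψ 1 ≤ K * (C * ψ ((1/2:ℝ)^n)) :=
        h4.trans (mul_le_mul_of_nonneg_left h2 hK0.le)
      have h5 : C * ψ 1 ≤ K * ψ ((1/2:ℝ)^n) := by
        have h4'' : C * (C * ψ 1) ≤ C * (K * ψ ((1/2:ℝ)^n)) := by
          calc C * (C * ψ 1) = C^2 * ψ 1 := by ring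
            _ ≤ K * (C * ψ ((1/2:ℝ)^n)) := h4'
            _ = C * (K * ψ ((1/2:ℝ)^n)) := by ring
        exact le_of_mul_le_mul_left h4'' hC0
      exact h1.trans h5
end

section
/- Let μ : ω → ℝ and let ψ : [0,1] → [0,∞) be essentially increasing on [0,1] with ψ(1/2) > 0, and suppose there is λ > 0 such that ψ(1/2^{2n}) ≥ λ·ψ(1/2^n) for every n < ω. If there are 0 ≤ ε < 1, n₀ < ω and M ≥ 1 such that 1/M ≤ μ(i) ≤ 2^{εn} whenever n₀ ≤ i ≤ n < ω and μ(i) ≠ 0, then there exist K ≥ 1 and n₁ with n₀ ≤ n₁ < ω such that ψ(1/2^n)/K ≤ ψ(μ(i)/2^n) ≤ K·ψ(1/2^n) whenever n₁ ≤ i ≤ n < ω and μ(i) ≠ 0. -/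
open Set

set_option maxHeartbeats 1000000 in
theorem stmt9 (μ : ℕ → ℝ) (ψ : ℝ → ℝ)
    (hψnn : ∀ t ∈ Icc (0:ℝ) 1, 0 ≤ ψ t)
    (hψei : EssIncOn ψ (Icc 0 1)) (hhalf : 0 < ψ (1/2))
    (hlam : ∃ lam > (0:ℝ), ∀ n : ℕ, lam * ψ ((1/2:ℝ)^n) ≤ ψ ((1/2:ℝ)^(2*n)))
    (ε : ℝ) (hε0 : 0 ≤ ε) (hε1 : ε < 1) (n₀ : ℕ) (M : ℝ) (hM : 1 ≤ M)
    (hμ : ∀ i n : ℕ, n₀ ≤ i → i ≤ n → μ i ≠ 0 →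
      1 / M ≤ μ i ∧ μ i ≤ (2:ℝ) ^ (ε * n)) :
    ∃ K : ℝ, 1 ≤ K ∧ ∃ n₁ : ℕ, n₀ ≤ n₁ ∧ ∀ i n : ℕ, n₁ ≤ i → i ≤ n → μ i ≠ 0 →
      ψ ((1/2:ℝ)^n) / K ≤ ψ (μ i / 2^n) ∧ ψ (μ i / 2^n) ≤ K * ψ ((1/2:ℝ)^n) := by
  obtain ⟨C, hC1, hC⟩ := hψei
  obtain ⟨lam, hlam0, hlam'⟩ := hlam
  set L : ℝ := min lam 1 with hLdef
  have hL0 : 0 < L := lt_min hlam0 one_pos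
  have hL1 : L ≤ 1 := min_le_right _ _
  have hC0 : (0:ℝ) ≤ C := by linarith
  have hmem : ∀ m : ℕ, (1/2:ℝ)^m ∈ Icc (0:ℝ) 1 := by
    intro m
    constructor
    · positivity
    · exact pow_le_one₀ (by norm_num) (by norm_num)
  have hLprop : ∀ n : ℕ, L * ψ ((1/2:ℝ)^n) ≤ ψ ((1/2:ℝ)^(2*n)) := by
    intro n
    calc L * ψ ((1/2:ℝ)^n) ≤ lam * ψ ((1/2:ℝ)^n) :=
          mul_le_mul_of_nonneg_right (min_le_left _ _) (hψnn _ (hmem n))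
      _ ≤ _ := hlam' n
  have hiter : ∀ k m : ℕ, L^k * ψ ((1/2:ℝ)^m) ≤ ψ ((1/2:ℝ)^(2^k * m)) := by
    intro k
    induction k with
    | zero => intro m; simp
    | succ k ih =>
      intro m
      have h1 := ih m
      have h2 := hLprop (2^k * m)
      calc L^(k+1) * ψ ((1/2:ℝ)^m) = L * (L^k * ψ ((1/2:ℝ)^m)) := by ring
        _ ≤ L * ψ ((1/2:ℝ)^(2^k*m)) := mul_le_mul_of_nonneg_left h1 hL0.le
        _ ≤ ψ ((1/2:ℝ)^(2*(2^k*m))) := h2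
        _ = ψ ((1/2:ℝ)^(2^(k+1)*m)) := by congr 1; ring
  have h1ε : 0 < 1 - ε := by linarith
  obtain ⟨k, hk⟩ := pow_unbounded_of_one_lt (2/(1-ε)) (by norm_num : (1:ℝ) < 2)
  obtain ⟨nM, hnM⟩ := pow_unbounded_of_one_lt M (by norm_num : (1:ℝ) < 2)
  have e1 : 2 < (1-ε) * 2^k := by
    rw [div_lt_iff₀ h1ε] at hk; nlinarith
  set K : ℝ := C^2 / L^(k+1) with hKdef
  have hLk1 : (0:ℝ) < L^(k+1) := pow_pos hL0 _
  have hLk : (0:ℝ) < L^k := pow_pos hL0 _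
  have hpow1 : L^(k+1) ≤ 1 := pow_le_one₀ hL0.le hL1
  have hLkk : L^(k+1) ≤ L := by
    calc L^(k+1) = L * L^k := by ring
      _ ≤ L * 1 := mul_le_mul_of_nonneg_left (pow_le_one₀ hL0.le hL1) hL0.le
      _ = L := mul_one L
  have hK1 : 1 ≤ K := by
    rw [hKdef, le_div_iff₀ hLk1]
    nlinarith
  have hCK : C ≤ K * L := by
    rw [hKdef, div_mul_eq_mul_div, le_div_iff₀ hLk1]
    nlinarith [mul_le_mul_of_nonneg_left hLkk hC0,
      mul_nonneg (mul_nonneg hC0 hL0.le) (by linarith : (0:ℝ) ≤ C - 1)]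
  have hKC2 : C^2 / L^k ≤ K := by
    rw [hKdef]
    apply div_le_div_of_nonneg_left (by positivity) hLk1
    calc L^(k+1) = L * L^k := by ring
      _ ≤ 1 * L^k := mul_le_mul_of_nonneg_right hL1 hLk.le
      _ = L^k := one_mul _
  refine ⟨K, hK1, max n₀ (max (2^k) nM), le_max_left _ _, ?_⟩
  intro i n hi hin hne
  have hn₀i : n₀ ≤ i := le_trans (le_max_left _ _) hi
  obtain ⟨hμ1, hμ2⟩ := hμ i n hn₀i hin hne
  have hkn : 2^k ≤ n := le_trans (le_trans (le_max_left _ _) (le_max_right n₀ _)) (le_trans hi hin)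
  have hMn : nM ≤ n := le_trans (le_trans (le_max_right (2^k) _) (le_max_right n₀ _)) (le_trans hi hin)
  have h2n : (0:ℝ) < 2^n := by positivity
  have hμpos : 0 < μ i := lt_of_lt_of_le (by positivity) hμ1
  have hM2n : M ≤ (2:ℝ)^n := le_trans hnM.le (pow_le_pow_right₀ (by norm_num) hMn)
  have hεn : μ i ≤ (2:ℝ)^n := by
    have h1 : (2:ℝ)^(ε*(n:ℝ)) ≤ (2:ℝ)^((n:ℝ)) :=
      Real.rpow_le_rpow_of_exponent_le one_le_two
        (by nlinarith [(Nat.cast_nonneg n : (0:ℝ) ≤ (n:ℝ))])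
    rw [Real.rpow_natCast] at h1
    exact le_trans hμ2 h1
  have hxmem : μ i / 2^n ∈ Icc (0:ℝ) 1 := by
    constructor
    · positivity
    · rw [div_le_one h2n]; exact hεn
  have hψx : 0 ≤ ψ (μ i / 2^n) := hψnn _ hxmem
  have hψn : 0 ≤ ψ ((1/2:ℝ)^n) := hψnn _ (hmem n)
  constructor
  · -- lower bound
    have hμlow : (1/2:ℝ)^n ≤ μ i := by
      have : (1/2:ℝ)^n ≤ 1/M := by
        rw [one_div, inv_pow, ← one_div, div_le_div_iff₀ (by positivity) (by linarith)]
        nlinarith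
      linarith
    have hcmp : (1/2:ℝ)^(2*n) ≤ μ i / 2^n := by
      rw [le_div_iff₀ h2n, two_mul, pow_add]
      have hid : ((1/2:ℝ))^n * 2^n = 1 := by
        rw [one_div, inv_pow, inv_mul_cancel₀ (by positivity)]
      calc (1/2:ℝ)^n * (1/2:ℝ)^n * 2^n = (1/2:ℝ)^n * ((1/2:ℝ)^n * 2^n) := by ring
        _ = (1/2:ℝ)^n := by rw [hid, mul_one]
        _ ≤ μ i := hμlow
    have step1 : ψ ((1/2:ℝ)^(2*n)) ≤ C * ψ (μ i / 2^n) := hC _ (hmem _) _ hxmem hcmp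
    have step2 := hLprop n
    rw [div_le_iff₀ (by linarith : (0:ℝ) < K)]
    have key : L * ψ ((1/2:ℝ)^n) ≤ L * (ψ (μ i / 2^n) * K) := by
      calc L * ψ ((1/2:ℝ)^n) ≤ ψ ((1/2:ℝ)^(2*n)) := step2
        _ ≤ C * ψ (μ i / 2^n) := step1
        _ ≤ (K*L) * ψ (μ i / 2^n) := mul_le_mul_of_nonneg_right hCK hψx
        _ = L * (ψ (μ i / 2^n) * K) := by ring
    exact le_of_mul_le_mul_left key hL0
  · -- upper bound
    set m : ℕ := ⌊(1-ε)*(n:ℝ)⌋₊ with hmdef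
    have hm1 : (m:ℝ) ≤ (1-ε)*(n:ℝ) := Nat.floor_le (by positivity)
    have hm2 : (1-ε)*(n:ℝ) < m + 1 := Nat.lt_floor_add_one _
    have hnk : (2:ℝ)^k ≤ (n:ℝ) := by exact_mod_cast Nat.cast_le.mpr hkn
    have hkm : n ≤ 2^k * m := by
      have hr : (n:ℝ) ≤ 2^k * (m:ℝ) := by
        have a1 : (1-ε)*(n:ℝ) - 1 ≤ (m:ℝ) := by linarith
        have a2 : (2:ℝ)^k * ((1-ε)*(n:ℝ) - 1) ≤ 2^k * (m:ℝ) :=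
          mul_le_mul_of_nonneg_left a1 (by positivity)
        have a3 : (0:ℝ) ≤ ((1-ε)*2^k - 2) * (n:ℝ) :=
          mul_nonneg (by linarith) (Nat.cast_nonneg n)
        nlinarith
      exact_mod_cast hr
    have hxm : μ i / 2^n ≤ (1/2:ℝ)^m := by
      have h1 : (2:ℝ)^(ε*(n:ℝ)) ≤ (2:ℝ)^((n:ℝ)-(m:ℝ)) :=
        Real.rpow_le_rpow_of_exponent_le one_le_two (by linarith)
      have h2 : (2:ℝ)^((n:ℝ)-(m:ℝ)) = 2^n / 2^m := by
        rw [Real.rpow_sub (by norm_num), Real.rpow_natCast, Real.rpow_natCast]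
      have h3 : μ i ≤ 2^n / 2^m := le_trans hμ2 (h1.trans_eq h2)
      rw [div_le_iff₀ h2n, one_div, inv_pow]
      rw [div_eq_mul_inv, mul_comm] at h3
      linarith
    have stepA : ψ (μ i / 2^n) ≤ C * ψ ((1/2:ℝ)^m) := hC _ hxmem _ (hmem m) hxm
    have stepB := hiter k m
    have stepC : ψ ((1/2:ℝ)^(2^k*m)) ≤ C * ψ ((1/2:ℝ)^n) :=
      hC _ (hmem _) _ (hmem n) (pow_le_pow_of_le_one (by norm_num) (by norm_num) hkm)
    have hψm : 0 ≤ ψ ((1/2:ℝ)^m) := hψnn _ (hmem m)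
    have hB : ψ ((1/2:ℝ)^m) ≤ C * ψ ((1/2:ℝ)^n) / L^k := by
      rw [le_div_iff₀ hLk]
      nlinarith
    calc ψ (μ i / 2^n) ≤ C * ψ ((1/2:ℝ)^m) := stepA
      _ ≤ C * (C * ψ ((1/2:ℝ)^n) / L^k) := mul_le_mul_of_nonneg_left hB hC0
      _ = (C^2 / L^k) * ψ ((1/2:ℝ)^n) := by ring
      _ ≤ K * ψ ((1/2:ℝ)^n) := mul_le_mul_of_nonneg_right hKC2 hψn
end

section
/- Let (δ_m)_{m<ω} be a sequence in (0,1) with 0 < inf_m δ_m ≤ sup_m δ_m < 1, and let (k_m)_{m<ω} be a strictly increasing sequence of natural numbers with k_0 ≥ 2 and k_{m+1} ≥ 2·k_m for every m. Define u_0 = 1 and, for n > 0, u_n = δ_m·u_{n−1} if n = k_m for some m, and u_n = u_{n−1} otherwise. Let δ = inf_m δ_m. Then: (i) u_{k_m} = Π_{0≤i≤m} δ_i for every m, and u_n = u_{k_m} whenever k_m ≤ n < k_{m+1}; (ii) u_n ≥ u_{n+1} for every n and u_n → 0 as n → ∞; (iii) u_{2n} ≥ δ·u_n for every n < ω. -/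
open Set

theorem stmt11 (δs : ℕ → ℝ) (hδmem : ∀ m, δs m ∈ Ioo (0:ℝ) 1)
    (hinf : 0 < ⨅ m, δs m) (hsup : (⨆ m, δs m) < 1)
    (k : ℕ → ℕ) (hkmono : StrictMono k) (hk0 : 2 ≤ k 0)
    (hk2 : ∀ m, 2 * k m ≤ k (m+1))
    (u : ℕ → ℝ) (hu0 : u 0 = 1)
    (huk : ∀ n m, n + 1 = k m → u (n+1) = δs m * u n)
    (hunk : ∀ n, (∀ m, n + 1 ≠ k m) → u (n+1) = u n) :
    (∀ m, u (k m) = ∏ i ∈ Finset.range (m+1), δs i) ∧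
    (∀ m n, k m ≤ n → n < k (m+1) → u n = u (k m)) ∧
    (∀ n, u (n+1) ≤ u n) ∧
    Filter.Tendsto u Filter.atTop (nhds 0) ∧
    (∀ n, (⨅ m, δs m) * u n ≤ u (2*n)) := by
  classical
  have hδpos : ∀ m, 0 < δs m := fun m => (hδmem m).1
  have hδlt : ∀ m, δs m < 1 := fun m => (hδmem m).2
  -- positivity of u
  have hupos : ∀ n, 0 < u n := by
    intro n
    induction n with
    | zero => rw [hu0]; norm_num
    | succ n ih =>
      by_cases h : ∃ m, n + 1 = k m
      · obtain ⟨m, hm⟩ := h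
        rw [huk n m hm]
        exact mul_pos (hδpos m) ih
      · rw [hunk n (fun m hm => h ⟨m, hm⟩)]; exact ih
  -- monotone decreasing
  have hdec : ∀ n, u (n+1) ≤ u n := by
    intro n
    by_cases h : ∃ m, n + 1 = k m
    · obtain ⟨m, hm⟩ := h
      rw [huk n m hm]
      nlinarith [hupos n, hδlt m, hδpos m]
    · rw [hunk n (fun m hm => h ⟨m, hm⟩)]
  have hanti : Antitone u := antitone_nat_of_succ_le hdec
  -- constancy on [k m, k (m+1))
  have hconst' : ∀ m d, k m + d < k (m+1) → u (k m + d) = u (k m) := by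
    intro m d
    induction d with
    | zero => intro _; rfl
    | succ d ih =>
      intro hd
      have hne : ∀ j, k m + d + 1 ≠ k j := by
        intro j hj
        have h1 : k m < k j := by omega
        have h2 : m < j := hkmono.lt_iff_lt.mp h1
        have h3 : k (m+1) ≤ k j := hkmono.monotone (by omega)
        omega
      rw [show k m + (d+1) = k m + d + 1 by omega, hunk (k m + d) hne,
        ih (by omega)]
  have hconst : ∀ m n, k m ≤ n → n < k (m+1) → u n = u (k m) := by
    intro m n hn hn'
    obtain ⟨d, rfl⟩ := Nat.exists_eq_add_of_le hn
    exact hconst' m d hn'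
  -- u n = 1 for n < k 0
  have hinit : ∀ n, n < k 0 → u n = 1 := by
    intro n hn
    induction n with
    | zero => exact hu0
    | succ n ih =>
      have hne : ∀ j, n + 1 ≠ k j := by
        intro j hj
        have : k 0 ≤ k j := hkmono.monotone (Nat.zero_le j)
        omega
      rw [hunk n hne, ih (by omega)]
  -- product formula
  have hprod : ∀ m, u (k m) = ∏ i ∈ Finset.range (m+1), δs i := by
    intro m
    induction m with
    | zero =>
      have h1 : k 0 - 1 + 1 = k 0 := by omega
      have h2 := huk (k 0 - 1) 0 h1
      rw [h1] at h2
      rw [h2, hinit (k 0 - 1) (by omega)]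
      simp
    | succ m ih =>
      have hlt : k m < k (m+1) := hkmono (by omega)
      have hge : 1 ≤ k m := by have := hkmono.monotone (Nat.zero_le m); omega
      have h1 : k (m+1) - 1 + 1 = k (m+1) := by omega
      have h2 := huk (k (m+1) - 1) (m+1) h1
      rw [h1] at h2
      calc u (k (m+1)) = δs (m+1) * u (k (m+1) - 1) := h2
        _ = δs (m+1) * ∏ i ∈ Finset.range (m+1), δs i := by
            rw [hconst m (k (m+1) - 1) (by omega) (by omega), ih]
        _ = ∏ i ∈ Finset.range (m+1+1), δs i := by
            rw [Finset.prod_range_succ δs (m+1), mul_comm]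
  -- bounds on inf and sup
  have hbdd : BddBelow (Set.range δs) := ⟨0, fun x ⟨m, hm⟩ => hm ▸ (hδpos m).le⟩
  have hδle : ∀ m, (⨅ m, δs m) ≤ δs m := fun m => ciInf_le hbdd m
  have hδ1 : (⨅ m, δs m) ≤ 1 := (hδle 0).trans (hδlt 0).le
  have hbddS : BddAbove (Set.range δs) := ⟨1, fun x ⟨m, hm⟩ => hm ▸ (hδlt m).le⟩
  have hSle : ∀ m, δs m ≤ ⨆ m, δs m := fun m => le_ciSup hbddS m
  have hS0 : (0:ℝ) ≤ ⨆ m, δs m := (hδpos 0).le.trans (hSle 0)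
  -- tendsto 0
  have hten : Filter.Tendsto u Filter.atTop (nhds 0) := by
    have hb : BddBelow (Set.range u) := ⟨0, fun x ⟨n, hn⟩ => hn ▸ (hupos n).le⟩
    have h1 := tendsto_atTop_ciInf hanti hb
    have hinfu : (⨅ n, u n) = 0 := by
      have hle : ∀ m, (⨅ n, u n) ≤ (⨆ m, δs m) ^ (m+1) := by
        intro m
        calc (⨅ n, u n) ≤ u (k m) := ciInf_le hb (k m)
        _ = ∏ i ∈ Finset.range (m+1), δs i := hprod m
        _ ≤ ∏ _i ∈ Finset.range (m+1), (⨆ m, δs m) :=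
            Finset.prod_le_prod (fun i _ => (hδpos i).le) (fun i _ => hSle i)
        _ = (⨆ m, δs m) ^ (m+1) := by simp
      have hpow : Filter.Tendsto (fun m => (⨆ m, δs m) ^ (m+1)) Filter.atTop (nhds 0) :=
        (tendsto_pow_atTop_nhds_zero_of_lt_one hS0 hsup).comp
          (Filter.tendsto_add_atTop_nat 1)
      have h2 : (⨅ n, u n) ≤ 0 :=
        le_of_tendsto_of_tendsto' tendsto_const_nhds hpow hle
      have h3 : (0:ℝ) ≤ ⨅ n, u n := le_ciInf (fun n => (hupos n).le)
      linarith
    rwa [hinfu] at h1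
  -- find the interval containing n
  have hfind : ∀ n, k 0 ≤ n → ∃ m, k m ≤ n ∧ n < k (m+1) := by
    intro n hn
    refine ⟨Nat.findGreatest (fun m => k m ≤ n) n,
      Nat.findGreatest_spec (P := fun m => k m ≤ n) (m := 0) (Nat.zero_le n) hn, ?_⟩
    by_contra h
    push_neg at h
    have hle : Nat.findGreatest (fun m => k m ≤ n) n + 1 ≤ n :=
      le_trans hkmono.le_apply h
    exact Nat.findGreatest_is_greatest (Nat.lt_succ_self _) hle h
  -- doubling bound
  have hdouble : ∀ n, (⨅ m, δs m) * u n ≤ u (2*n) := by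
    intro n
    by_cases hn : n < k 0
    · rw [hinit n hn]
      have h2n1 : 2 * n < k (0+1) := by have := hk2 0; omega
      by_cases h2n : 2 * n < k 0
      · rw [hinit (2*n) h2n]; linarith
      · have h4 : u (2*n) = u (k 0) := hconst 0 (2*n) (by omega) h2n1
        rw [h4, hprod 0]
        simpa using hδle 0
    · push_neg at hn
      obtain ⟨m, hm1, hm2⟩ := hfind n hn
      have hun : u n = u (k m) := hconst m n hm1 hm2
      have h2nlt : 2*n < k (m+1+1) := by have := hk2 (m+1); omega
      by_cases h2 : 2*n < k (m+1)
      · have h5 : u (2*n) = u (k m) := hconst m (2*n) (by omega) h2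
        rw [h5, hun]
        nlinarith [hupos (k m)]
      · have h5 : u (2*n) = u (k (m+1)) := hconst (m+1) (2*n) (by omega) h2nlt
        rw [h5, hprod (m+1), Finset.prod_range_succ, ← hprod m, ← hun]
        have h6 := hδle (m+1)
        nlinarith [hupos n]
  exact ⟨hprod, hconst, hdec, hten, hdouble⟩
end

section
/- Let α ≥ 1. Fix the data: a_0 = 0, a_{l+1} = a_l + 1 + l·a_l and I_l = [a_l, a_{l+1}) ∩ ω; a sequence (δ_m)_{m<ω} in (0,1) with 0 < inf_m δ_m ≤ sup_m δ_m < 1; a strictly increasing sequence (k_m)_{m<ω} of natural numbers with k_0 ≥ 2 and k_{m+1} ≥ 2·k_m. For U ⊆ ω define u_U(0) = 1 and, for n > 0, u_U(n) = δ_m·u_U(n−1) if n = k_m for some m ∈ I_l with l ∈ U, and u_U(n) = u_U(n−1) otherwise. Let φ : [0,1] → [0,∞) be continuous and essentially increasing on [0,1] with φ(x) > 0 for x > 0 and φ(x²) ≥ λ·φ(x) for some λ > 0 and all x ∈ [0,1]. For each U ⊆ ω let φ_U : [0,1] → [0,∞) be continuous increasing with φ_U(1/2^n) = u_U(n) for every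 n, and set f_U(x) = x^α·φ(x)·φ_U(x). If U, V ⊆ ω satisfy U ⊆* V and V ⊆* U (i.e., their symmetric difference is finite), then the relations E_{f_U} and E_{f_V} on [0,1]^ω are equal. -/
open Set

lemma key13 (a : ℕ → ℕ) (haS : ∀ l, a (l+1) = a l + 1 + l * a l)
    (δs : ℕ → ℝ) (hδpos : ∀ m, 0 < δs m)
    (k : ℕ → ℕ) (hkmono : StrictMono k)
    (u : Set ℕ → ℕ → ℝ) (hu0 : ∀ U, u U 0 = 1)
    (huk : ∀ (U : Set ℕ) (n m l : ℕ), n + 1 = k m → a l ≤ m → m < a (l+1) → l ∈ U →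
      u U (n+1) = δs m * u U n)
    (hunk : ∀ (U : Set ℕ) (n : ℕ),
      (¬ ∃ m l, n + 1 = k m ∧ a l ≤ m ∧ m < a (l+1) ∧ l ∈ U) → u U (n+1) = u U n)
    (U V : Set ℕ) (hUV : (U \ V).Finite) (hVU : (V \ U).Finite) :
    ∃ B : ℝ, 1 ≤ B ∧ ∀ n, u U n ≤ B * u V n := by
  have upos : ∀ (W : Set ℕ) n, 0 < u W n := by
    intro W n
    induction n with
    | zero => simp [hu0]
    | succ n ih =>
      by_cases h : ∃ m l, n + 1 = k m ∧ a l ≤ m ∧ m < a (l+1) ∧ l ∈ W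
      · obtain ⟨m, l, h1, h2, h3, h4⟩ := h
        rw [huk W n m l h1 h2 h3 h4]
        exact mul_pos (hδpos m) ih
      · rw [hunk W n h]; exact ih
  have hamono : StrictMono a := strictMono_nat_of_lt_succ (fun l => by rw [haS]; omega)
  set F := (hUV.union hVU).toFinset with hF
  set L := F.sup id with hLdef
  have hL : ∀ l ∈ (U \ V ∪ V \ U), l ≤ L := by
    intro l hl
    exact Finset.le_sup (f := id) ((hUV.union hVU).mem_toFinset.mpr hl)
  set N := k (a (L+1)) with hN
  have hstep : ∀ n, N ≤ n → ∃ c : ℝ, u U (n+1) = c * u U n ∧ u V (n+1) = c * u V n := by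
    intro n hn
    have hlbig : ∀ m l, n + 1 = k m → a l ≤ m → m < a (l+1) → L < l := by
      intro m l h1 h2 h3
      by_contra h
      push_neg at h
      have hle : a (l+1) ≤ a (L+1) := hamono.monotone (by omega)
      have hm : m < a (L+1) := lt_of_lt_of_le h3 hle
      have : k m < k (a (L+1)) := hkmono hm
      omega
    by_cases h : ∃ m l, n + 1 = k m ∧ a l ≤ m ∧ m < a (l+1) ∧ l ∈ U
    · obtain ⟨m, l, h1, h2, h3, h4⟩ := h
      have hl : L < l := hlbig m l h1 h2 h3
      have hlV : l ∈ V := by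
        by_contra hv
        have := hL l (Or.inl ⟨h4, hv⟩); omega
      exact ⟨δs m, huk U n m l h1 h2 h3 h4, huk V n m l h1 h2 h3 hlV⟩
    · have hV : ¬ ∃ m l, n + 1 = k m ∧ a l ≤ m ∧ m < a (l+1) ∧ l ∈ V := by
        rintro ⟨m, l, h1, h2, h3, h4⟩
        have hl : L < l := hlbig m l h1 h2 h3
        have hlU : l ∈ U := by
          by_contra hu2
          have := hL l (Or.inr ⟨h4, hu2⟩); omega
        exact h ⟨m, l, h1, h2, h3, hlU⟩
      exact ⟨1, by rw [hunk U n h]; ring, by rw [hunk V n hV]; ring⟩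
  have hconst : ∀ n, N ≤ n → u U n * u V N = u V n * u U N := by
    intro n
    induction n with
    | zero =>
      intro hn
      have : N = 0 := Nat.le_zero.mp hn
      rw [this]; ring
    | succ n ih =>
      intro hn
      rcases Nat.lt_or_ge N (n+1) with h | h
      · have hn' : N ≤ n := by omega
        obtain ⟨c, h1, h2⟩ := hstep n hn'
        rw [h1, h2]
        linear_combination c * ih hn'
      · have : N = n + 1 := by omega
        rw [this]; ring
  have hne : (Finset.range (N+1)).Nonempty := ⟨0, by simp⟩
  set B0 : ℝ := (Finset.range (N+1)).sup' hne (fun j => u U j / u V j) with hB0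
  refine ⟨max 1 B0, le_max_left _ _, ?_⟩
  intro n
  have hdiv : u U n / u V n = u U (min n N) / u V (min n N) := by
    rcases le_or_gt n N with h | h
    · rw [min_eq_left h]
    · rw [min_eq_right h.le]
      have hc := hconst n h.le
      have h1 := (upos V n).ne'
      have h2 := (upos V N).ne'
      field_simp
      linear_combination hc
  have hle : u U n / u V n ≤ B0 := by
    rw [hdiv]
    exact Finset.le_sup' (f := fun j => u U j / u V j) (Finset.mem_range.mpr (by omega))
  have := (div_le_iff₀ (upos V n)).mp (hle.trans (le_max_right 1 B0))
  linarith

theorem stmt13 (α : ℝ) (hα : 1 ≤ α)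
    (a : ℕ → ℕ) (ha0 : a 0 = 0) (haS : ∀ l, a (l+1) = a l + 1 + l * a l)
    (δs : ℕ → ℝ) (hδmem : ∀ m, δs m ∈ Ioo (0:ℝ) 1)
    (hinf : 0 < ⨅ m, δs m) (hsup : (⨆ m, δs m) < 1)
    (k : ℕ → ℕ) (hkmono : StrictMono k) (hk0 : 2 ≤ k 0)
    (hk2 : ∀ m, 2 * k m ≤ k (m+1))
    (u : Set ℕ → ℕ → ℝ) (hu0 : ∀ U, u U 0 = 1)
    (huk : ∀ (U : Set ℕ) (n m l : ℕ), n + 1 = k m → a l ≤ m → m < a (l+1) → l ∈ U →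
      u U (n+1) = δs m * u U n)
    (hunk : ∀ (U : Set ℕ) (n : ℕ),
      (¬ ∃ m l, n + 1 = k m ∧ a l ≤ m ∧ m < a (l+1) ∧ l ∈ U) → u U (n+1) = u U n)
    (φ : ℝ → ℝ) (hφc : ContinuousOn φ (Icc 0 1)) (hφei : EssIncOn φ (Icc 0 1))
    (hφnn : ∀ t ∈ Icc (0:ℝ) 1, 0 ≤ φ t) (hφpos : ∀ t ∈ Ioc (0:ℝ) 1, 0 < φ t)
    (hlam : ∃ lam > (0:ℝ), ∀ t ∈ Icc (0:ℝ) 1, lam * φ t ≤ φ (t^2))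
    (φU : Set ℕ → ℝ → ℝ)
    (hφUc : ∀ U, ContinuousOn (φU U) (Icc 0 1))
    (hφUm : ∀ U, MonotoneOn (φU U) (Icc 0 1))
    (hφUnn : ∀ U, ∀ t ∈ Icc (0:ℝ) 1, 0 ≤ φU U t)
    (hφUval : ∀ U (n : ℕ), φU U ((1/2:ℝ)^n) = u U n)
    (U V : Set ℕ) (hUV : (U \ V).Finite) (hVU : (V \ U).Finite) :
    EF (fun t => t ^ α * φ t * φU U t) = EF (fun t => t ^ α * φ t * φU V t) := by
  have hδpos : ∀ m, 0 < δs m := fun m => (hδmem m).1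
  -- the infimum δ0
  set δ0 : ℝ := ⨅ m, δs m with hδ0
  have hbdd : BddBelow (Set.range δs) := ⟨0, by rintro x ⟨m, rfl⟩; exact (hδpos m).le⟩
  have hδ0le : ∀ m, δ0 ≤ δs m := fun m => ciInf_le hbdd m
  have hδ0le1 : δ0 ≤ 1 := (hδ0le 0).trans (hδmem 0).2.le
  have upos : ∀ (W : Set ℕ) n, 0 < u W n := by
    intro W n
    induction n with
    | zero => simp [hu0]
    | succ n ih =>
      by_cases h : ∃ m l, n + 1 = k m ∧ a l ≤ m ∧ m < a (l+1) ∧ l ∈ W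
      · obtain ⟨m, l, h1, h2, h3, h4⟩ := h
        rw [huk W n m l h1 h2 h3 h4]
        exact mul_pos (hδpos m) ih
      · rw [hunk W n h]; exact ih
  have hstep' : ∀ (W : Set ℕ) n, δ0 * u W n ≤ u W (n+1) := by
    intro W n
    by_cases h : ∃ m l, n + 1 = k m ∧ a l ≤ m ∧ m < a (l+1) ∧ l ∈ W
    · obtain ⟨m, l, h1, h2, h3, h4⟩ := h
      rw [huk W n m l h1 h2 h3 h4]
      exact mul_le_mul_of_nonneg_right (hδ0le m) (upos W n).le
    · rw [hunk W n h]
      nlinarith [upos W n]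
  -- comparison of φU on (0,1]
  have phicomp : ∀ (W W' : Set ℕ) (B : ℝ), 1 ≤ B → (∀ n, u W n ≤ B * u W' n) →
      ∀ t ∈ Ioc (0:ℝ) 1, φU W t ≤ (B / δ0) * φU W' t := by
    intro W W' B hB hBn t ht
    obtain ⟨ht0, ht1⟩ := ht
    have h2 : ∃ m : ℕ, ((1:ℝ)/2)^m < t := exists_pow_lt_of_lt_one ht0 (by norm_num)
    have hm0 : Nat.find h2 ≠ 0 := by
      intro h0
      have := Nat.find_spec h2
      rw [h0] at this
      simp at this
      linarith
    set n := Nat.find h2 - 1 with hn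
    have hmn : Nat.find h2 = n + 1 := by omega
    have hup : t ≤ ((1:ℝ)/2)^n := by
      have := Nat.find_min h2 (m := n) (by omega)
      linarith [not_lt.mp this]
    have hlo : ((1:ℝ)/2)^(n+1) ≤ t := by
      have := Nat.find_spec h2
      rw [hmn] at this
      linarith
    have hmem1 : ((1:ℝ)/2)^n ∈ Icc (0:ℝ) 1 := ⟨by positivity, pow_le_one₀ (by norm_num) (by norm_num)⟩
    have hmem2 : ((1:ℝ)/2)^(n+1) ∈ Icc (0:ℝ) 1 := ⟨by positivity, pow_le_one₀ (by norm_num) (by norm_num)⟩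
    have htmem : t ∈ Icc (0:ℝ) 1 := ⟨ht0.le, ht1⟩
    have hBδ : 0 ≤ B / δ0 := by positivity
    calc φU W t ≤ φU W (((1:ℝ)/2)^n) := hφUm W htmem hmem1 hup
      _ = u W n := hφUval W n
      _ ≤ B * u W' n := hBn n
      _ = (B / δ0) * (δ0 * u W' n) := by field_simp
      _ ≤ (B / δ0) * u W' (n+1) := mul_le_mul_of_nonneg_left (hstep' W' n) hBδ
      _ = (B / δ0) * φU W' (((1:ℝ)/2)^(n+1)) := by rw [hφUval]
      _ ≤ (B / δ0) * φU W' t := mul_le_mul_of_nonneg_left (hφUm W' hmem2 htmem hlo) hBδ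
  -- comparison of the f's on [0,1]
  have fcomp : ∀ (W W' : Set ℕ) (C : ℝ), 0 ≤ C → (∀ t ∈ Ioc (0:ℝ) 1, φU W t ≤ C * φU W' t) →
      ∀ t ∈ Icc (0:ℝ) 1, t ^ α * φ t * φU W t ≤ C * (t ^ α * φ t * φU W' t) := by
    intro W W' C hC h t ht
    obtain ⟨ht0, ht1⟩ := ht
    rcases eq_or_lt_of_le ht0 with rfl | htpos
    · rw [Real.zero_rpow (by linarith : α ≠ 0)]
      simp
    · have h1 : 0 ≤ t ^ α := Real.rpow_nonneg ht0 α
      have h2 : 0 ≤ φ t := hφnn t ⟨ht0, ht1⟩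
      have h3 := h t ⟨htpos, ht1⟩
      calc t ^ α * φ t * φU W t ≤ t ^ α * φ t * (C * φU W' t) :=
            mul_le_mul_of_nonneg_left h3 (mul_nonneg h1 h2)
        _ = C * (t ^ α * φ t * φU W' t) := by ring
  -- summability transfer
  have sumtrans : ∀ (W W' : Set ℕ) (C : ℝ),
      (∀ t ∈ Icc (0:ℝ) 1, t ^ α * φ t * φU W t ≤ C * (t ^ α * φ t * φU W' t)) →
      ∀ x y : ℕ → Icc (0:ℝ) 1, EF (fun t => t ^ α * φ t * φU W' t) x y →
        EF (fun t => t ^ α * φ t * φU W t) x y := by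
    intro W W' C hcomp x y h
    have hmem : ∀ n : ℕ, |(x n : ℝ) - (y n : ℝ)| ∈ Icc (0:ℝ) 1 := by
      intro n
      refine ⟨abs_nonneg _, abs_le.mpr ⟨?_, ?_⟩⟩
      · have := (x n).2.1; have := (y n).2.2; linarith
      · have := (x n).2.2; have := (y n).2.1; linarith
    refine Summable.of_nonneg_of_le (fun n => ?_) (fun n => hcomp _ (hmem n)) (h.mul_left C)
    have hm := hmem n
    exact mul_nonneg (mul_nonneg (Real.rpow_nonneg (hm.1) α) (hφnn _ hm)) (hφUnn W _ hm)
  obtain ⟨B1, hB1, hB1n⟩ := key13 a haS δs hδpos k hkmono u hu0 huk hunk U V hUV hVU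
  obtain ⟨B2, hB2, hB2n⟩ := key13 a haS δs hδpos k hkmono u hu0 huk hunk V U hVU hUV
  have hc1 := fcomp U V (B1 / δ0) (by positivity) (phicomp U V B1 hB1 hB1n)
  have hc2 := fcomp V U (B2 / δ0) (by positivity) (phicomp V U B2 hB2 hB2n)
  funext x y
  exact propext ⟨sumtrans V U (B2 / δ0) hc2 x y, sumtrans U V (B1 / δ0) hc1 x y⟩
end
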